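/- arXiv:1905.10213 — 8 statements merged into one kernel-verified Lean document; each statement's English description precedes it below -/
import Mathlib

section
/- A nonzero x ∈ X is a cyclic vector for T if and only if for every N ∈ ℕ there exists a polynomial P such that ‖P(T)x − e_0‖_N ≤ 4. -/
/-- On a real topological vector space whose topology is generated by an increasing sequence of
seminorms whose unit balls form a basis of neighborhoods of zero, given a continuous linear
operator `T` with cyclic vector `e₀`, a nonzero `x` is cyclic for `T` iff for every `N` there is
a polynomial `P` with `‖P(T)x - e₀‖_N ≤ 4`. -/
theorem cyclic_iff_four (X : Type*) [AddCommGroup X] [Module ℝ X] [TopologicalSpace X]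
    [IsTopologicalAddGroup X] [ContinuousSMul ℝ X]
    (p : ℕ → Seminorm ℝ X)
    (hmono : ∀ N (x : X), p N x ≤ p (N + 1) x)
    (hbasis : (nhds (0 : X)).HasBasis (fun _ : ℕ => True) (fun N => {x : X | p N x ≤ 1}))
    (T : X →L[ℝ] X) (e₀ : X)
    (he₀ : Dense (Submodule.span ℝ (Set.range fun k : ℕ => (⇑T)^[k] e₀) : Set X))
    (x : X) (hx : x ≠ 0) :
    Dense (Submodule.span ℝ (Set.range fun k : ℕ => (⇑T)^[k] x) : Set X) ↔
      ∀ N : ℕ, ∃ (n : ℕ) (c : ℕ → ℝ),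
        p N ((∑ i ∈ Finset.range (n + 1), c i • (⇑T)^[i] x) - e₀) ≤ 4 := by
  set f : ℕ → X := fun k : ℕ => (⇑T)^[k] x with hf
  set S : Submodule ℝ X := Submodule.span ℝ (Set.range f) with hS
  constructor
  · -- forward direction
    intro hd N
    have he : e₀ ∈ closure (S : Set X) := by
      rw [hd.closure_eq]; exact Set.mem_univ _
    -- the set {y | p N (y - e₀) ≤ 1} is a neighborhood of e₀
    have hV : {y : X | p N (y - e₀) ≤ 1} ∈ nhds e₀ := by
      have hcont : Continuous fun y : X => y - e₀ := continuous_id.sub continuous_const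
      have h0 : {z : X | p N z ≤ 1} ∈ nhds ((fun y : X => y - e₀) e₀) := by
        simpa using hbasis.mem_of_mem (i := N) trivial
      exact hcont.continuousAt.preimage_mem_nhds h0
    obtain ⟨y, hy1, hy2⟩ := (mem_closure_iff_nhds.mp he) _ hV
    -- y ∈ S : write it as a finite sum
    obtain ⟨c, hc⟩ := Finsupp.mem_span_range_iff_exists_finsupp.mp hy2
    set n : ℕ := c.support.sup id with hn
    refine ⟨n, fun i => c i, ?_⟩
    have hsum : (∑ i ∈ Finset.range (n + 1), c i • f i) = y := by
      rw [← hc, Finsupp.sum]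
      refine (Finset.sum_subset ?_ ?_).symm
      · intro i hi
        simp only [Finset.mem_range, Nat.lt_succ_iff]
        exact Finset.le_sup (f := id) hi
      · intro i _ hi
        rw [Finsupp.notMem_support_iff.mp hi, zero_smul]
    rw [hsum]
    calc p N (y - e₀) ≤ 1 := hy1
      _ ≤ 4 := by norm_num
  · -- backward direction
    intro h
    -- every approximant lies in S
    have hmem : ∀ N, ∃ y ∈ S, p N (y - e₀) ≤ 4 := by
      intro N
      obtain ⟨n, c, hc⟩ := h N
      refine ⟨∑ i ∈ Finset.range (n + 1), c i • f i, ?_, hc⟩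
      exact Submodule.sum_mem _ fun i _ =>
        Submodule.smul_mem _ _ (Submodule.subset_span ⟨i, rfl⟩)
    -- upgrade ≤ 4 to ≤ 1 via scaling
    have hmem1 : ∀ N, ∃ y ∈ S, p N (y - e₀) ≤ 1 := by
      intro N
      have hsmall : {z : X | p N z ≤ (1 : ℝ) / 4} ∈ nhds (0 : X) := by
        have hcont : Continuous fun z : X => (4 : ℝ) • z := continuous_const_smul _
        have h0 : {z : X | p N z ≤ 1} ∈ nhds ((fun z : X => (4 : ℝ) • z) 0) := by
          simpa using hbasis.mem_of_mem (i := N) trivial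
        have := hcont.continuousAt.preimage_mem_nhds h0
        have heq : (fun z : X => (4 : ℝ) • z) ⁻¹' {z : X | p N z ≤ 1}
            = {z : X | p N z ≤ (1 : ℝ) / 4} := by
          ext z
          simp only [Set.mem_preimage, Set.mem_setOf_eq, map_smul_eq_mul]
          rw [show ‖(4:ℝ)‖ = 4 by norm_num]
          constructor <;> intro hz <;> linarith
        rwa [heq] at this
      obtain ⟨M, -, hM⟩ := hbasis.mem_iff.mp hsmall
      obtain ⟨y, hyS, hy⟩ := hmem M
      refine ⟨y, hyS, ?_⟩
      have h14 : ((1 : ℝ) / 4) • (y - e₀) ∈ {z : X | p M z ≤ 1} := by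
        simp only [Set.mem_setOf_eq, map_smul_eq_mul]
        rw [show ‖(1:ℝ)/4‖ = 1/4 by norm_num]
        linarith
      have := hM h14
      simp only [Set.mem_setOf_eq, map_smul_eq_mul] at this
      rw [show ‖(1:ℝ)/4‖ = 1/4 by norm_num] at this
      linarith
    -- e₀ ∈ closure S
    have he : e₀ ∈ closure (S : Set X) := by
      rw [mem_closure_iff_nhds]
      intro U hU
      have hcont : Continuous fun z : X => e₀ + z := continuous_const.add continuous_id
      have h0 : U ∈ nhds ((fun z : X => e₀ + z) 0) := by simpa using hU
      have hpre := hcont.continuousAt.preimage_mem_nhds h0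
      obtain ⟨N, -, hN⟩ := hbasis.mem_iff.mp hpre
      obtain ⟨y, hyS, hy⟩ := hmem1 N
      refine ⟨y, ?_, hyS⟩
      have : y - e₀ ∈ (fun z : X => e₀ + z) ⁻¹' U := hN hy
      simpa using this
    -- closure S is T-invariant
    have hTS : ∀ s ∈ S, T s ∈ S := by
      intro s hs
      have hmap : Submodule.map (T : X →ₗ[ℝ] X) S ≤ S := by
        rw [hS, Submodule.map_span]
        refine Submodule.span_le.mpr ?_
        rintro z ⟨w, ⟨k, rfl⟩, rfl⟩
        exact Submodule.subset_span ⟨k + 1, Function.iterate_succ_apply' (⇑T) k x⟩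
      exact hmap ⟨s, hs, rfl⟩
    have hTclos : ∀ s ∈ closure (S : Set X), T s ∈ closure (S : Set X) := by
      intro s hs
      have h1 : T s ∈ ⇑T '' closure (S : Set X) := ⟨s, hs, rfl⟩
      have h2 : ⇑T '' closure (S : Set X) ⊆ closure (⇑T '' (S : Set X)) :=
        image_closure_subset_closure_image T.continuous
      have h3 : closure (⇑T '' (S : Set X)) ⊆ closure (S : Set X) :=
        closure_mono (fun z ⟨w, hw, hz⟩ => hz ▸ hTS w hw)
      exact h3 (h2 h1)
    -- all iterates of e₀ are in closure S
    have hiter : ∀ k : ℕ, (⇑T)^[k] e₀ ∈ closure (S : Set X) := by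
      intro k
      induction k with
      | zero => exact he
      | succ k ih =>
        rw [Function.iterate_succ_apply']
        exact hTclos _ ih
    -- hence the dense span of iterates of e₀ sits inside closure S
    have hsub : (Submodule.span ℝ (Set.range fun k : ℕ => (⇑T)^[k] e₀) : Set X)
        ⊆ closure (S : Set X) := by
      have hcl : IsClosed (closure (S : Set X)) := isClosed_closure
      have : Submodule.span ℝ (Set.range fun k : ℕ => (⇑T)^[k] e₀)
          ≤ (S.topologicalClosure) := by
        refine Submodule.span_le.mpr ?_
        rintro z ⟨k, rfl⟩
        exact hiter k
      exact fun z hz => this hz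
    have hdc : Dense (closure (S : Set X)) := he₀.mono hsub
    exact dense_closure.mp hdc
end

section
/- There exists a real number D ≥ 1 with the following property: for every y ∈ K and every linear map T : E → E which is a perturbed weighted forward shift (i.e., for every j, Te_j ∈ span{e_0,…,e_{j+1}} with nonzero coefficient of e_{j+1}) and satisfies T^j e_0 = γ_j for j = 0,…,c+d−1, there is a polynomial P(t) = Σ_{i=1}^{c+d} c_i·t^i with Σ_{i=1}^{c+d} |c_i| ≤ D for which ‖P(T)y − e_0‖ ≤ 2ε‖e_c‖ + D·max{‖T^j e_0‖ : c+d ≤ j ≤ 2(c+d−1)}. -/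
noncomputable def uSeq (z : ℕ → ℝ) : ℕ → ℝ := fun n =>
  if n = 0 then (z 0)⁻¹
  else -(z 0)⁻¹ * ∑ i ∈ (Finset.range n).attach, z (n - i.1) * uSeq z i.1
termination_by n => n
decreasing_by exact Finset.mem_range.mp i.2

theorem uSeq_conv (z : ℕ → ℝ) (hz : z 0 ≠ 0) (n : ℕ) :
    ∑ a ∈ Finset.range (n + 1), uSeq z a * z (n - a) = if n = 0 then 1 else 0 := by
  cases n with
  | zero =>
    rw [Finset.sum_range_one, uSeq]
    simp [inv_mul_cancel₀ hz]
  | succ n =>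
    rw [Finset.sum_range_succ]
    have h1 : uSeq z (n+1) = -(z 0)⁻¹ * ∑ i ∈ Finset.range (n+1), z (n+1 - i) * uSeq z i := by
      rw [uSeq]
      simp only [Nat.succ_ne_zero, if_false]
      rw [Finset.sum_attach (Finset.range (n+1)) (fun i => z (n+1-i) * uSeq z i)]
    have h2 : ∑ a ∈ Finset.range (n+1), uSeq z a * z (n+1-a)
        = ∑ i ∈ Finset.range (n+1), z (n+1-i) * uSeq z i :=
      Finset.sum_congr rfl fun a _ => mul_comm _ _
    rw [h1, h2]
    simp only [Nat.succ_ne_zero, if_false, Nat.sub_self]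
    field_simp
    ring

theorem sum_triangle {M : Type*} [AddCommMonoid M] (d : ℕ) (f : ℕ → ℕ → M) :
    ∑ a ∈ Finset.range d, ∑ b ∈ Finset.range (d - a), f a b
      = ∑ n ∈ Finset.range d, ∑ a ∈ Finset.range (n + 1), f a (n - a) := by
  rw [Finset.sum_sigma', Finset.sum_sigma']
  refine Finset.sum_nbij' (fun p => ⟨p.1 + p.2, p.1⟩) (fun p => ⟨p.2, p.1 - p.2⟩)
    ?_ ?_ ?_ ?_ ?_ <;>
  · rintro ⟨a, b⟩ h
    first
    | (simp only [Finset.mem_sigma, Finset.mem_range, Sigma.mk.inj_iff, heq_eq_eq,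
        Nat.add_sub_cancel_left, true_and, and_true] at h ⊢; omega)
    | (simp only [Finset.mem_sigma, Finset.mem_range, Sigma.mk.inj_iff, heq_eq_eq,
        Nat.add_sub_cancel_left, true_and, and_true] at h ⊢)

noncomputable def coFun (c d m : ℕ) (x : ℕ → ℝ) : ℕ → ℝ := fun i =>
  if c - m ≤ i ∧ i ≤ c + d - 1 then uSeq (fun a => x (m + a)) (i - (c - m)) else 0

theorem coFun_key {E : Type*} [AddCommGroup E] [Module ℝ E] (γ : ℕ → E) (c d m : ℕ)
    (hd : 0 < d) (hmc : m < c) (x : ℕ → ℝ)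
    (hm : x m ≠ 0) (hmin : ∀ i, i < m → x i = 0) :
    ∑ i ∈ Finset.Icc 1 (c + d), ∑ j ∈ Finset.range (c + d),
      (coFun c d m x i * x j) • (if i + j < c + d then γ (i + j) else (0 : E)) = γ c := by
  set z : ℕ → ℝ := fun a => x (m + a) with hzdef
  have hz0 : z 0 ≠ 0 := by simpa [hzdef] using hm
  have hsub : Finset.Ico (c - m) (c + d) ⊆ Finset.Icc 1 (c + d) := by
    intro i hi; simp only [Finset.mem_Icc, Finset.mem_Ico] at *; omega
  have hco0 : ∀ i, i ∉ Finset.Ico (c - m) (c + d) → coFun c d m x i = 0 := by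
    intro i hi
    simp only [coFun]
    rw [if_neg (by simp only [Finset.mem_Ico] at hi; omega)]
  have step1 : ∑ i ∈ Finset.Icc 1 (c + d), ∑ j ∈ Finset.range (c + d),
      (coFun c d m x i * x j) • (if i + j < c + d then γ (i + j) else (0 : E))
      = ∑ i ∈ Finset.Ico (c - m) (c + d), ∑ j ∈ Finset.range (c + d),
      (coFun c d m x i * x j) • (if i + j < c + d then γ (i + j) else (0 : E)) := by
    refine (Finset.sum_subset hsub ?_).symm
    intro i _ hni
    simp [hco0 i hni]
  rw [step1, Finset.sum_Ico_eq_sum_range]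
  have hrange : c + d - (c - m) = m + d := by omega
  rw [hrange]
  have step2 : ∀ a ∈ Finset.range (m + d),
      ∑ j ∈ Finset.range (c + d),
        (coFun c d m x (c - m + a) * x j) • (if c - m + a + j < c + d then γ (c - m + a + j) else (0 : E))
      = ∑ b ∈ Finset.range (c + d - m),
        (uSeq z a * z b) • (if a + b < d then γ (c + (a + b)) else (0 : E)) := by
    intro a ha
    rw [Finset.mem_range] at ha
    have hcoval : coFun c d m x (c - m + a) = uSeq z a := by
      simp only [coFun]
      rw [if_pos (by omega)]
      congr 1
      omega
    have hsub2 : Finset.Ico m (c + d) ⊆ Finset.range (c + d) := by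
      intro j hj; simp only [Finset.mem_Ico, Finset.mem_range] at *; omega
    rw [← Finset.sum_subset hsub2 (by
      intro j hj hnj
      simp only [Finset.mem_Ico, Finset.mem_range] at hj hnj
      have : x j = 0 := hmin j (by omega)
      simp [this])]
    rw [Finset.sum_Ico_eq_sum_range]
    refine Finset.sum_congr rfl ?_
    intro b hb
    rw [Finset.mem_range] at hb
    rw [hcoval]
    have h1 : c - m + a + (m + b) = c + (a + b) := by omega
    simp only [h1, Nat.add_lt_add_iff_left]
    rfl
  rw [Finset.sum_congr rfl step2]
  have step3 : ∑ a ∈ Finset.range (m + d), ∑ b ∈ Finset.range (c + d - m),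
      (uSeq z a * z b) • (if a + b < d then γ (c + (a + b)) else (0 : E))
      = ∑ a ∈ Finset.range d, ∑ b ∈ Finset.range (d - a),
      (uSeq z a * z b) • (if a + b < d then γ (c + (a + b)) else (0 : E)) := by
    have hA : Finset.range d ⊆ Finset.range (m + d) := by
      intro a ha; simp only [Finset.mem_range] at ha ⊢; omega
    have hz : ∀ a ∈ Finset.range (m + d), a ∉ Finset.range d →
        (∑ b ∈ Finset.range (c + d - m),
          (uSeq z a * z b) • (if a + b < d then γ (c + (a + b)) else (0 : E))) = 0 := by
      intro a ha hna
      simp only [Finset.mem_range] at ha hna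
      refine Finset.sum_eq_zero fun b _ => ?_
      rw [if_neg (by omega), smul_zero]
    refine ((Finset.sum_subset hA hz).symm).trans ?_
    refine Finset.sum_congr rfl fun a ha => ?_
    rw [Finset.mem_range] at ha
    have hB : Finset.range (d - a) ⊆ Finset.range (c + d - m) := by
      intro b hb; simp only [Finset.mem_range] at hb ⊢; omega
    refine (Finset.sum_subset hB fun b hb hnb => ?_).symm
    simp only [Finset.mem_range] at hb hnb
    rw [if_neg (by omega), smul_zero]
  rw [step3, sum_triangle]
  have step4 : ∀ n ∈ Finset.range d,
      ∑ a ∈ Finset.range (n + 1),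
        (uSeq z a * z (n - a)) • (if a + (n - a) < d then γ (c + (a + (n - a))) else (0 : E))
      = (if n = 0 then (1:ℝ) else 0) • γ (c + n) := by
    intro n hn
    rw [Finset.mem_range] at hn
    have heq : ∀ a ∈ Finset.range (n + 1),
        (uSeq z a * z (n - a)) • (if a + (n - a) < d then γ (c + (a + (n - a))) else (0 : E))
        = (uSeq z a * z (n - a)) • γ (c + n) := by
      intro a ha
      rw [Finset.mem_range] at ha
      have h1 : a + (n - a) = n := by omega
      rw [h1, if_pos hn]
    rw [Finset.sum_congr rfl heq, ← Finset.sum_smul, uSeq_conv z hz0 n]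
  rw [Finset.sum_congr rfl step4]
  rw [Finset.sum_eq_single 0]
  · simp
  · intro n _ hn0
    rw [if_neg hn0, zero_smul]
  · intro h
    exact absurd (Finset.mem_range.mpr hd) h


/-- Read's lemma: existence of a uniform constant `D ≥ 1` such that for every `y` in the compact
set `K` and every perturbed weighted forward shift `T` with `T^j e₀ = γ_j` for `j < c + d`,
there is a polynomial `P(t) = Σ_{i=1}^{c+d} c_i t^i` with `Σ |c_i| ≤ D` and
`‖P(T)y - e₀‖ ≤ 2ε‖e_c‖ + D · max_{c+d ≤ j ≤ 2(c+d-1)} ‖T^j e₀‖`. -/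
theorem read_lemma (E : Type*) [NormedAddCommGroup E] [NormedSpace ℝ E]
    (e : ℕ → E) (he : LinearIndependent ℝ e)
    (hspan : Submodule.span ℝ (Set.range e) = ⊤)
    (ε : ℝ) (hε : 0 < ε) (c d : ℕ) (hc : 0 < c) (hd : 0 < d)
    (γ : ℕ → E)
    (hγ : ∀ j < c + d, ∃ μ : Fin (j + 1) → ℝ, μ (Fin.last j) ≠ 0 ∧
      γ j = ∑ i : Fin (j + 1), μ i • e i)
    (hγc : γ c = ε • e c + e 0)
    (K : Set E) (hKH : K ⊆ (Submodule.span ℝ (e '' {i | i < c + d}) : Set E))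
    (hKcomp : IsCompact K)
    (hKcoef : ∀ y ∈ K, ∀ yc : ℕ → ℝ,
      y = ∑ i ∈ Finset.range (c + d), yc i • γ i → ∃ j < c, yc j ≠ 0) :
    ∃ D : ℝ, 1 ≤ D ∧ ∀ y ∈ K, ∀ T : E →ₗ[ℝ] E,
      (∀ j : ℕ, ∃ lam : Fin (j + 2) → ℝ, lam (Fin.last (j + 1)) ≠ 0 ∧
        T (e j) = ∑ i : Fin (j + 2), lam i • e i) →
      (∀ j < c + d, (T ^ j) (e 0) = γ j) →
      ∃ co : ℕ → ℝ, (∑ i ∈ Finset.Icc 1 (c + d), |co i|) ≤ D ∧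
        ‖(∑ i ∈ Finset.Icc 1 (c + d), co i • (T ^ i) y) - e 0‖ ≤
          2 * ε * ‖e c‖ +
            D * sSup ((fun j => ‖(T ^ j) (e 0)‖) '' Set.Icc (c + d) (2 * (c + d - 1))) := by
  classical
  set H := Submodule.span ℝ (e '' {i | i < c + d}) with hH
  haveI : FiniteDimensional ℝ H :=
    FiniteDimensional.span_of_finite ℝ ((Set.finite_Iio (c + d)).image e)
  -- γ j lies in H for j < c + d
  have hγmem : ∀ j, j < c + d → γ j ∈ H := by
    intro j hj
    obtain ⟨μ, _, hμ⟩ := hγ j hj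
    rw [hμ]
    refine Submodule.sum_mem _ fun i _ => Submodule.smul_mem _ _ ?_
    exact Submodule.subset_span ⟨(i : ℕ),
      by simp only [Set.mem_setOf_eq]; have := i.2; omega, rfl⟩
  set γH : Fin (c + d) → H := fun j => ⟨γ (j : ℕ), hγmem _ j.2⟩ with hγH
  -- finrank of H
  have himg : e '' {i | i < c + d} = Set.range (fun i : Fin (c + d) => e (i : ℕ)) := by
    ext z
    constructor
    · rintro ⟨i, hi, rfl⟩; exact ⟨⟨i, hi⟩, rfl⟩
    · rintro ⟨i, rfl⟩; exact ⟨(i : ℕ), i.2, rfl⟩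
  have hli : LinearIndependent ℝ (fun i : Fin (c + d) => e (i : ℕ)) :=
    he.comp _ Fin.val_injective
  have hcard : Fintype.card (Fin (c + d)) = Module.finrank ℝ H := by
    rw [hH, himg, finrank_span_eq_card hli, Fintype.card_fin]
  -- e j is in the span of the γ's, for j < c + d
  have hespan : ∀ j, j < c + d → e j ∈ Submodule.span ℝ (γ '' {i | i < c + d}) := by
    intro j
    induction j using Nat.strong_induction_on with
    | _ j ih =>
      intro hj
      obtain ⟨μ, hμ0, hμ⟩ := hγ j hj
      have hsum : γ j = (∑ i : Fin j, μ i.castSucc • e (i : ℕ)) + μ (Fin.last j) • e j := by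
        rw [hμ, Fin.sum_univ_castSucc]
        simp [Fin.val_last]
      have hej : e j = (μ (Fin.last j))⁻¹ •
          (γ j - ∑ i : Fin j, μ i.castSucc • e (i : ℕ)) := by
        rw [hsum, add_sub_cancel_left, smul_smul, inv_mul_cancel₀ hμ0, one_smul]
      rw [hej]
      refine Submodule.smul_mem _ _ (Submodule.sub_mem _
        (Submodule.subset_span ⟨j, hj, rfl⟩)
        (Submodule.sum_mem _ fun i _ => Submodule.smul_mem _ _ ?_))
      exact ih (i : ℕ) i.2 (lt_trans i.2 hj)
  have hle : ⊤ ≤ Submodule.span ℝ (Set.range γH) := by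
    intro xH _
    have h1 : H ≤ Submodule.span ℝ (γ '' {i | i < c + d}) := by
      rw [hH]
      refine Submodule.span_le.mpr ?_
      rintro _ ⟨i, hi, rfl⟩
      exact hespan i hi
    have h2 : (xH : E) ∈ Submodule.span ℝ (γ '' {i | i < c + d}) := h1 xH.2
    have himg2 : γ '' {i | i < c + d} = H.subtype '' (Set.range γH) := by
      ext z
      constructor
      · rintro ⟨i, hi, rfl⟩
        exact ⟨γH ⟨i, hi⟩, ⟨⟨i, hi⟩, rfl⟩, rfl⟩
      · rintro ⟨_, ⟨i, rfl⟩, rfl⟩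
        exact ⟨(i : ℕ), i.2, rfl⟩
    rw [himg2, Submodule.span_image] at h2
    obtain ⟨z, hz, hzeq⟩ := h2
    have hzx : z = xH := Subtype.ext hzeq
    rwa [hzx] at hz
  set b : Module.Basis (Fin (c + d)) ℝ H := basisOfTopLeSpanOfCardEqFinrank γH hle hcard with hb
  have hbcoe : ∀ i : Fin (c + d), (b i : E) = γ (i : ℕ) := by
    intro i
    rw [hb, coe_basisOfTopLeSpanOfCardEqFinrank]
  -- the coordinate extension
  set xt : (Fin (c + d) → ℝ) → ℕ → ℝ :=
    fun v j => if h : j < c + d then v ⟨j, h⟩ else 0 with hxt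
  have hxtlt : ∀ (v : Fin (c + d) → ℝ) (j : ℕ) (h : j < c + d), xt v j = v ⟨j, h⟩ := by
    intro v j h
    simp only [hxt]
    rw [dif_pos h]
  -- representation of elements of H
  have hrep : ∀ x : H, (x : E) = ∑ j ∈ Finset.range (c + d), xt (b.equivFun x) j • γ j := by
    intro x
    have h := b.sum_equivFun x
    have h2 : ((∑ i : Fin (c + d), b.equivFun x i • b i : H) : E) = (x : E) := by rw [h]
    rw [← h2]
    push_cast
    rw [← Fin.sum_univ_eq_sum_range (fun j => xt (b.equivFun x) j • γ j) (c + d)]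
    refine Finset.sum_congr rfl fun i _ => ?_
    rw [hxtlt _ _ i.2, hbcoe]
  -- compact coordinate set
  have hclosed : IsClosed (H : Set E) := Submodule.closed_of_finiteDimensional H
  have hK₁ : IsCompact (Subtype.val ⁻¹' K : Set H) :=
    hclosed.isClosedEmbedding_subtypeVal.isCompact_preimage hKcomp
  set K₀ : Set (Fin (c + d) → ℝ) :=
    (fun x : H => b.equivFun x) '' (Subtype.val ⁻¹' K) with hK₀def
  have hK₀ : IsCompact K₀ :=
    hK₁.image (b.equivFun.toLinearMap.continuous_of_finiteDimensional)
  have hec : (0 : ℝ) < ‖e c‖ := norm_pos_iff.mpr (he.ne_zero c)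
  have hεc : (0 : ℝ) < ε * ‖e c‖ := mul_pos hε hec
  -- the selection of coefficient vectors
  have hsel : ∀ v : Fin (c + d) → ℝ, ∃ cov : ℕ → ℝ, cov (c + d) = 0 ∧
      (v ∈ K₀ → ∑ i ∈ Finset.Icc 1 (c + d), ∑ j ∈ Finset.range (c + d),
        (cov i * xt v j) • (if i + j < c + d then γ (i + j) else (0 : E)) = γ c) := by
    intro v
    by_cases hv : v ∈ K₀
    · obtain ⟨x, hx1, hveq⟩ := hv
      dsimp only at hveq
      subst hveq
      have hyK : (x : E) ∈ K := hx1
      have hrepx := hrep x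
      obtain ⟨j0, hj0c, hj0⟩ := hKcoef _ hyK (xt (b.equivFun x)) hrepx
      have hex : ∃ j, xt (b.equivFun x) j ≠ 0 := ⟨j0, hj0⟩
      have hm := Nat.find_spec hex
      have hmin : ∀ i, i < Nat.find hex → xt (b.equivFun x) i = 0 := by
        intro i hi
        by_contra hne
        exact Nat.find_min hex hi hne
      have hmc : Nat.find hex < c := lt_of_le_of_lt (Nat.find_min' hex hj0) hj0c
      refine ⟨coFun c d (Nat.find hex) (xt (b.equivFun x)), ?_, fun _ => ?_⟩
      · simp only [coFun]
        rw [if_neg (by omega)]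
      · exact coFun_key γ c d (Nat.find hex) hd hmc (xt (b.equivFun x)) hm hmin
    · exact ⟨fun _ => 0, rfl, fun h => absurd h hv⟩
  choose cov hcov0 hcovG using hsel
  -- continuity and the open cover
  have hcont : ∀ cw : ℕ → ℝ, Continuous fun v' : Fin (c + d) → ℝ =>
      ∑ i ∈ Finset.Icc 1 (c + d), ∑ j ∈ Finset.range (c + d),
        (cw i * xt v' j) • (if i + j < c + d then γ (i + j) else (0 : E)) := by
    intro cw
    refine continuous_finset_sum _ fun i _ => continuous_finset_sum _ fun j hj => ?_
    have hj' := Finset.mem_range.mp hj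
    refine Continuous.smul (Continuous.mul continuous_const ?_) continuous_const
    simp only [hxt]
    have heq : (fun v' : Fin (c + d) → ℝ =>
        dite (j < c + d) (fun h => v' ⟨j, h⟩) (fun _ => (0:ℝ))) = fun v' => v' ⟨j, hj'⟩ := by
      funext v'
      rw [dif_pos hj']
    rw [heq]
    exact continuous_apply _
  set U : (Fin (c + d) → ℝ) → Set (Fin (c + d) → ℝ) := fun v =>
    {v' | ‖(∑ i ∈ Finset.Icc 1 (c + d), ∑ j ∈ Finset.range (c + d),
      (cov v i * xt v' j) • (if i + j < c + d then γ (i + j) else (0 : E))) - γ c‖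
        < ε * ‖e c‖} with hU
  have hUopen : ∀ v ∈ K₀, IsOpen (U v) := by
    intro v _
    have heq : U v = (fun v' => ‖(∑ i ∈ Finset.Icc 1 (c + d), ∑ j ∈ Finset.range (c + d),
        (cov v i * xt v' j) • (if i + j < c + d then γ (i + j) else (0 : E))) - γ c‖) ⁻¹'
        (Set.Iio (ε * ‖e c‖)) := rfl
    rw [heq]
    exact IsOpen.preimage (((hcont (cov v)).sub continuous_const).norm) isOpen_Iio
  have hcover : K₀ ⊆ ⋃ v ∈ K₀, U v := by
    intro v hv
    refine Set.mem_biUnion hv ?_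
    simp only [hU, Set.mem_setOf_eq, hcovG v hv, sub_self, norm_zero]
    exact hεc
  obtain ⟨t, htK₀, htfin, htcover⟩ := hK₀.elim_finite_subcover_image hUopen hcover
  -- the uniform bound on coordinates
  have hNcont : Continuous fun v : Fin (c + d) → ℝ => ∑ j ∈ Finset.range (c + d), |xt v j| := by
    refine continuous_finset_sum _ fun j hj => ?_
    have hj' := Finset.mem_range.mp hj
    simp only [hxt]
    have heq : (fun v' : Fin (c + d) → ℝ =>
        |dite (j < c + d) (fun h => v' ⟨j, h⟩) (fun _ => (0:ℝ))|) = fun v' => |v' ⟨j, hj'⟩| := by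
      funext v'
      rw [dif_pos hj']
    rw [heq]
    exact (continuous_apply _).abs
  obtain ⟨R0, hR0⟩ := (hK₀.image hNcont).bddAbove
  have hR : ∀ v ∈ K₀, ∑ j ∈ Finset.range (c + d), |xt v j| ≤ max R0 0 := by
    intro v hv
    exact le_trans (hR0 (Set.mem_image_of_mem _ hv)) (le_max_left _ _)
  have hR0' : (0 : ℝ) ≤ max R0 0 := le_max_right _ _
  -- the constant D
  set D : ℝ := 1 + ∑ v ∈ htfin.toFinset,
    (∑ i ∈ Finset.Icc 1 (c + d), |cov v i|) * (1 + max R0 0) with hDdef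
  have hterm_nonneg : ∀ v ∈ htfin.toFinset,
      0 ≤ (∑ i ∈ Finset.Icc 1 (c + d), |cov v i|) * (1 + max R0 0) := by
    intro v _
    exact mul_nonneg (Finset.sum_nonneg fun i _ => abs_nonneg _) (by linarith)
  have hD1 : 1 ≤ D := by
    rw [hDdef]
    have := Finset.sum_nonneg hterm_nonneg
    linarith
  have hDv : ∀ v ∈ htfin.toFinset,
      (∑ i ∈ Finset.Icc 1 (c + d), |cov v i|) * (1 + max R0 0) ≤ D := by
    intro v hv
    have h1 := Finset.single_le_sum hterm_nonneg hv
    rw [hDdef]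
    linarith
  refine ⟨D, hD1, ?_⟩
  intro y hy T _ hT2
  set x : H := ⟨y, hKH hy⟩ with hx
  set v : Fin (c + d) → ℝ := b.equivFun x with hv
  have hvK₀ : v ∈ K₀ := ⟨x, hy, rfl⟩
  obtain ⟨v₀, hv₀t, hvU⟩ : ∃ v₀ ∈ t, v ∈ U v₀ := by
    have := htcover hvK₀
    simpa using this
  have hv₀K₀ : v₀ ∈ K₀ := htK₀ hv₀t
  have hv₀fin : v₀ ∈ htfin.toFinset := htfin.mem_toFinset.mpr hv₀t
  have hA0 : (0:ℝ) ≤ ∑ i ∈ Finset.Icc 1 (c + d), |cov v₀ i| :=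
    Finset.sum_nonneg fun i _ => abs_nonneg _
  have hAD : (∑ i ∈ Finset.Icc 1 (c + d), |cov v₀ i|) ≤ D := by
    have h1 := hDv v₀ hv₀fin
    nlinarith
  have hANv : (∑ i ∈ Finset.Icc 1 (c + d), |cov v₀ i|)
      * (∑ j ∈ Finset.range (c + d), |xt v j|) ≤ D := by
    have h1 := hDv v₀ hv₀fin
    have h2 := hR v hvK₀
    have h3 : (0:ℝ) ≤ ∑ j ∈ Finset.range (c + d), |xt v j| :=
      Finset.sum_nonneg fun j _ => abs_nonneg _
    nlinarith
  refine ⟨cov v₀, hAD, ?_⟩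
  -- the sSup bound
  set S : ℝ := sSup ((fun j => ‖(T ^ j) (e 0)‖) '' Set.Icc (c + d) (2 * (c + d - 1))) with hS
  have hbddS : BddAbove ((fun j => ‖(T ^ j) (e 0)‖) '' Set.Icc (c + d) (2 * (c + d - 1))) :=
    ((Set.finite_Icc _ _).image _).bddAbove
  have hSle : ∀ k, c + d ≤ k → k ≤ 2 * (c + d - 1) → ‖(T ^ k) (e 0)‖ ≤ S := by
    intro k h1 h2
    exact le_csSup hbddS ⟨k, ⟨h1, h2⟩, rfl⟩
  have hS0 : (0 : ℝ) ≤ S :=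
    le_trans (norm_nonneg _) (hSle (c + d) le_rfl (by omega))
  -- the decomposition of the sum
  have hyrep : y = ∑ j ∈ Finset.range (c + d), xt v j • γ j := hrep x
  have hsum : ∑ i ∈ Finset.Icc 1 (c + d), cov v₀ i • (T ^ i) y
      = (∑ i ∈ Finset.Icc 1 (c + d), ∑ j ∈ Finset.range (c + d),
          (cov v₀ i * xt v j) • (if i + j < c + d then γ (i + j) else (0 : E)))
        + ∑ i ∈ Finset.Icc 1 (c + d), ∑ j ∈ Finset.range (c + d),
          (cov v₀ i * xt v j) • (if i + j < c + d then (0 : E) else (T ^ (i + j)) (e 0)) := by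
    rw [← Finset.sum_add_distrib]
    refine Finset.sum_congr rfl fun i _ => ?_
    rw [← Finset.sum_add_distrib]
    conv_lhs => rw [hyrep]
    rw [map_sum, Finset.smul_sum]
    refine Finset.sum_congr rfl fun j hj => ?_
    have hj' := Finset.mem_range.mp hj
    rw [map_smul, smul_smul, ← hT2 j hj', ← Module.End.mul_apply, ← pow_add]
    by_cases hij : i + j < c + d
    · rw [if_pos hij, if_pos hij, smul_zero, add_zero, hT2 _ hij]
    · rw [if_neg hij, if_neg hij, smul_zero, zero_add]
  have hvU' : ‖(∑ i ∈ Finset.Icc 1 (c + d), ∑ j ∈ Finset.range (c + d),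
      (cov v₀ i * xt v j) • (if i + j < c + d then γ (i + j) else (0 : E))) - γ c‖
      < ε * ‖e c‖ := hvU
  have hErr : ‖∑ i ∈ Finset.Icc 1 (c + d), ∑ j ∈ Finset.range (c + d),
      (cov v₀ i * xt v j) • (if i + j < c + d then (0 : E) else (T ^ (i + j)) (e 0))‖
      ≤ D * S := by
    refine le_trans (norm_sum_le _ _) ?_
    have hterm : ∀ i ∈ Finset.Icc 1 (c + d),
        ‖∑ j ∈ Finset.range (c + d),
          (cov v₀ i * xt v j) • (if i + j < c + d then (0 : E) else (T ^ (i + j)) (e 0))‖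
        ≤ ∑ j ∈ Finset.range (c + d), |cov v₀ i| * |xt v j| * S := by
      intro i hi
      refine le_trans (norm_sum_le _ _) (Finset.sum_le_sum fun j hj => ?_)
      rw [Finset.mem_Icc] at hi
      rw [Finset.mem_range] at hj
      rw [norm_smul, Real.norm_eq_abs, abs_mul]
      by_cases hij : i + j < c + d
      · rw [if_pos hij, norm_zero, mul_zero]
        exact mul_nonneg (mul_nonneg (abs_nonneg _) (abs_nonneg _)) hS0
      · rw [if_neg hij]
        by_cases hicd : i = c + d
        · have hz : cov v₀ i = 0 := by rw [hicd]; exact hcov0 v₀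
          simp [hz]
        · have hTle : ‖(T ^ (i + j)) (e 0)‖ ≤ S := hSle (i + j) (by omega) (by omega)
          exact mul_le_mul_of_nonneg_left hTle (mul_nonneg (abs_nonneg _) (abs_nonneg _))
    refine le_trans (Finset.sum_le_sum hterm) ?_
    have hfac : ∑ i ∈ Finset.Icc 1 (c + d), ∑ j ∈ Finset.range (c + d),
        (|cov v₀ i| * |xt v j| * S)
        = (∑ i ∈ Finset.Icc 1 (c + d), |cov v₀ i|)
          * (∑ j ∈ Finset.range (c + d), |xt v j|) * S := by
      simp only [Finset.sum_mul, Finset.mul_sum, mul_assoc]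
      rw [Finset.sum_comm]
    rw [hfac]
    exact mul_le_mul_of_nonneg_right hANv hS0
  have hkey : (∑ i ∈ Finset.Icc 1 (c + d), cov v₀ i • (T ^ i) y) - e 0
      = ((∑ i ∈ Finset.Icc 1 (c + d), ∑ j ∈ Finset.range (c + d),
          (cov v₀ i * xt v j) • (if i + j < c + d then γ (i + j) else (0 : E))) - γ c)
        + (∑ i ∈ Finset.Icc 1 (c + d), ∑ j ∈ Finset.range (c + d),
          (cov v₀ i * xt v j) • (if i + j < c + d then (0 : E) else (T ^ (i + j)) (e 0)))
        + (γ c - e 0) := by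
    rw [hsum]
    abel
  have hγce : ‖γ c - e 0‖ = ε * ‖e c‖ := by
    rw [hγc, add_sub_cancel_right, norm_smul, Real.norm_eq_abs, abs_of_pos hε]
  calc ‖(∑ i ∈ Finset.Icc 1 (c + d), cov v₀ i • (T ^ i) y) - e 0‖
      = ‖((∑ i ∈ Finset.Icc 1 (c + d), ∑ j ∈ Finset.range (c + d),
          (cov v₀ i * xt v j) • (if i + j < c + d then γ (i + j) else (0 : E))) - γ c)
        + (∑ i ∈ Finset.Icc 1 (c + d), ∑ j ∈ Finset.range (c + d),
          (cov v₀ i * xt v j) • (if i + j < c + d then (0 : E) else (T ^ (i + j)) (e 0)))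
        + (γ c - e 0)‖ := by rw [hkey]
    _ ≤ ‖(∑ i ∈ Finset.Icc 1 (c + d), ∑ j ∈ Finset.range (c + d),
          (cov v₀ i * xt v j) • (if i + j < c + d then γ (i + j) else (0 : E))) - γ c‖
        + ‖∑ i ∈ Finset.Icc 1 (c + d), ∑ j ∈ Finset.range (c + d),
          (cov v₀ i * xt v j) • (if i + j < c + d then (0 : E) else (T ^ (i + j)) (e 0))‖
        + ‖γ c - e 0‖ := norm_add₃_le
    _ ≤ ε * ‖e c‖ + D * S + ε * ‖e c‖ :=
        add_le_add (add_le_add (le_of_lt hvU') hErr) (le_of_eq hγce)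
    _ = 2 * ε * ‖e c‖ + D * S := by ring
end

section
/- There exists a doubly indexed family of reals (A_{N,j})_{N,j∈ℕ} such that: (1) A_{N,j} ≥ 1 for every N,j; (2) for every j, the sequence N ↦ A_{N,j} is increasing and unbounded; (3) for every N, the sequence j ↦ A_{N,j} is increasing and unbounded; (4) A_{N,j+1} ≤ 2·A_{N,j} for every N,j; (5) lim_{j→∞} A_{N,j}/A_{N+1,j} = 0 for every N; (6) lim_{j→∞} 2^j/A_{N,j} = ∞ for every N; (7) the seminorm families {p_N : N ∈ ℕ} and {|·|_N : N ∈ ℕ} are equivalent on s: for every N there exist M ∈ ℕ and C > 0 with p_N(x) ≤ C·|x|_M and |x|_N ≤ C·p_M(x) for all x ∈ s. -/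
open Filter

/-- Eventually `(j+1)^K ≤ 2^j`. -/
private lemma ev_pow_le (K : ℕ) : ∀ᶠ j : ℕ in atTop, ((j : ℝ) + 1) ^ K ≤ 2 ^ j := by
  have h := tendsto_pow_const_div_const_pow_of_one_lt K (by norm_num : (1:ℝ) < 2)
  have h2 : Tendsto (fun j : ℕ => ((j + 1 : ℕ) : ℝ) ^ K / 2 ^ (j + 1)) atTop (nhds 0) :=
    h.comp (tendsto_add_atTop_nat 1)
  have h3 := h2.eventually_lt_const (by norm_num : (0:ℝ) < 1/2)
  filter_upwards [h3] with j hj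
  have hp : (0:ℝ) < 2 ^ (j + 1) := by positivity
  rw [div_lt_iff₀ hp] at hj
  have : ((j + 1 : ℕ) : ℝ) = (j : ℝ) + 1 := by push_cast; ring
  rw [this, pow_succ] at hj
  nlinarith [hj]

private lemma bernoulli_half (m j : ℕ) (h : 2 * m ≤ j + 2) :
    ((j : ℝ) + 2) ^ m ≤ 2 * ((j : ℝ) + 1) ^ m := by
  have hj2 : (0:ℝ) < (j : ℝ) + 2 := by positivity
  have hb := one_add_mul_le_pow (a := -(1 / ((j : ℝ) + 2))) (by
    rw [neg_le, neg_neg]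
    calc (1 : ℝ) / ((j : ℝ) + 2) ≤ 1 := by
          rw [div_le_one hj2]; linarith
      _ ≤ 2 := by norm_num) m
  have he : (1 : ℝ) + -(1 / ((j : ℝ) + 2)) = ((j : ℝ) + 1) / ((j : ℝ) + 2) := by
    field_simp
    ring
  rw [he] at hb
  have hm : (m : ℝ) / ((j : ℝ) + 2) ≤ 1 / 2 := by
    rw [div_le_div_iff₀ hj2 (by norm_num)]
    have : (2 : ℝ) * m ≤ (j : ℝ) + 2 := by exact_mod_cast h
    linarith
  have h1 : (1 : ℝ) / 2 ≤ (((j : ℝ) + 1) / ((j : ℝ) + 2)) ^ m := by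
    calc (1 : ℝ) / 2 ≤ 1 + (m : ℝ) * -(1 / ((j : ℝ) + 2)) := by
          have : (m : ℝ) * (1 / ((j : ℝ) + 2)) = (m : ℝ) / ((j : ℝ) + 2) := by ring
          rw [mul_neg, this]; linarith
      _ ≤ _ := hb
  rw [div_pow, le_div_iff₀ (by positivity)] at h1
  nlinarith [h1]

private lemma nat_pow_dom (m j : ℕ) (h : j + 3 ≤ 2 * m) : 2 ^ j ≤ (j + 1) ^ m := by
  match j with
  | 0 => simpa using Nat.one_le_pow m 1 (by norm_num)
  | 1 =>
    have hm : 2 ≤ m := by omega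
    calc 2 ^ 1 = 2 ^ 1 := rfl
      _ ≤ 2 ^ m := Nat.pow_le_pow_right (by norm_num) (by omega)
  | 2 =>
    have hm : 3 ≤ m := by omega
    calc 2 ^ 2 ≤ 3 ^ 3 := by norm_num
      _ ≤ 3 ^ m := Nat.pow_le_pow_right (by norm_num) hm
  | (k + 3) =>
    set j := k + 3 with hjdef
    have h4 : 4 ≤ j + 1 := by omega
    have hsq : (2 ^ j) ^ 2 ≤ ((j + 1) ^ m) ^ 2 := by
      have e1 : (2 ^ j) ^ 2 = 4 ^ j := by
        rw [show (4:ℕ) = 2 ^ 2 from rfl, ← pow_mul, ← pow_mul, Nat.mul_comm]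
      have e2 : ((j + 1) ^ m) ^ 2 = (j + 1) ^ (2 * m) := by
        rw [← pow_mul, Nat.mul_comm]
      rw [e1, e2]
      calc 4 ^ j ≤ (j + 1) ^ j := Nat.pow_le_pow_left h4 j
        _ ≤ (j + 1) ^ (2 * m) := Nat.pow_le_pow_right (by omega) (by omega)
    exact (Nat.pow_le_pow_iff_left (by norm_num : 2 ≠ 0)).mp hsq

private lemma real_pow_dom (m j : ℕ) (h : j + 3 ≤ 2 * m) :
    (2 : ℝ) ^ j ≤ ((j : ℝ) + 1) ^ m := by
  have := nat_pow_dom m j h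
  have hc : ((2 ^ j : ℕ) : ℝ) ≤ (((j + 1) ^ m : ℕ) : ℝ) := by exact_mod_cast this
  push_cast at hc
  exact hc

private lemma keymin (m j : ℕ) :
    min ((2:ℝ) ^ (j+1)) (((j:ℝ) + 2) ^ m) ≤ 2 * min ((2:ℝ) ^ j) (((j:ℝ) + 1) ^ m) := by
  rcases le_or_gt (2 * m) (j + 2) with h | h
  · have hb := bernoulli_half m j h
    rcases le_total ((2:ℝ) ^ j) (((j:ℝ) + 1) ^ m) with h' | h'
    · rw [min_eq_left h']
      calc min ((2:ℝ) ^ (j+1)) (((j:ℝ) + 2) ^ m) ≤ 2 ^ (j+1) := min_le_left _ _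
        _ = 2 * 2 ^ j := by rw [pow_succ]; ring
    · rw [min_eq_right h']
      calc min ((2:ℝ) ^ (j+1)) (((j:ℝ) + 2) ^ m) ≤ ((j:ℝ) + 2) ^ m := min_le_right _ _
        _ ≤ 2 * ((j:ℝ) + 1) ^ m := hb
  · have hb := real_pow_dom m j (by omega)
    rw [min_eq_left hb]
    calc min ((2:ℝ) ^ (j+1)) (((j:ℝ) + 2) ^ m) ≤ 2 ^ (j+1) := min_le_left _ _
      _ = 2 * 2 ^ j := by rw [pow_succ]; ring

/-- There exists a matrix `(A_{N,j})` with the properties of Proposition 1, in particular the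
seminorms `|x|_N = Σ_j |x_j| A_{N,j}` are equivalent to the seminorms
`p_N(x) = Σ_j |x_j| (j+1)^N` on the space `s` of rapidly decreasing sequences. -/
theorem exists_matrix :
    ∃ A : ℕ → ℕ → ℝ,
      (∀ N j, 1 ≤ A N j) ∧
      (∀ j, Monotone (fun N => A N j) ∧ ¬ BddAbove (Set.range fun N => A N j)) ∧
      (∀ N, Monotone (fun j => A N j) ∧ ¬ BddAbove (Set.range fun j => A N j)) ∧
      (∀ N j, A N (j + 1) ≤ 2 * A N j) ∧
      (∀ N, Tendsto (fun j => A N j / A (N + 1) j) atTop (nhds 0)) ∧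
      (∀ N, Tendsto (fun j => (2 : ℝ) ^ j / A N j) atTop atTop) ∧
      (∀ N : ℕ, ∃ (M : ℕ) (C : ℝ), 0 < C ∧
        ∀ x : ℕ → ℝ, (∀ K : ℕ, Summable fun j => |x j| * (j + 1 : ℝ) ^ K) →
          (∑' j, |x j| * (j + 1 : ℝ) ^ N) ≤ C * (∑' j, |x j| * A M j) ∧
          (∑' j, |x j| * A N j) ≤ C * (∑' j, |x j| * (j + 1 : ℝ) ^ M)) := by
  set A : ℕ → ℕ → ℝ := fun N j => ((N:ℝ) + 1) * min ((2:ℝ) ^ j) (((j:ℝ) + 1) ^ (N + 1)) with hA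
  have hmin_pos : ∀ (N j : ℕ), (0:ℝ) < min ((2:ℝ) ^ j) (((j:ℝ) + 1) ^ (N + 1)) := by
    intro N j
    exact lt_min (by positivity) (by positivity)
  have hNcast0 : ∀ N : ℕ, (1:ℝ) ≤ (N:ℝ) + 1 := by
    intro N
    have : (0:ℝ) ≤ (N:ℝ) := Nat.cast_nonneg N
    linarith
  have hmin_one : ∀ (N j : ℕ), (1:ℝ) ≤ min ((2:ℝ) ^ j) (((j:ℝ) + 1) ^ (N + 1)) := by
    intro N j
    apply le_min
    · exact one_le_pow₀ (by norm_num)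
    · exact one_le_pow₀ (hNcast0 j)
  have hNcast : ∀ N : ℕ, (1:ℝ) ≤ (N:ℝ) + 1 := by
    intro N
    have : (0:ℝ) ≤ (N:ℝ) := Nat.cast_nonneg N
    linarith
  have hApos : ∀ (N j : ℕ), (0:ℝ) < A N j := by
    intro N j
    rw [hA]
    exact mul_pos (by positivity) (hmin_pos N j)
  have h1 : ∀ (N j : ℕ), 1 ≤ A N j := by
    intro N j
    rw [hA]
    calc (1:ℝ) ≤ min ((2:ℝ) ^ j) (((j:ℝ) + 1) ^ (N + 1)) := hmin_one N j
      _ ≤ ((N:ℝ) + 1) * min ((2:ℝ) ^ j) (((j:ℝ) + 1) ^ (N + 1)) :=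
          le_mul_of_one_le_left (hmin_pos N j).le (hNcast N)
  -- monotone in N
  have hmonoN : ∀ j, Monotone fun N => A N j := by
    intro j N N' hNN'
    simp only [hA]
    apply mul_le_mul
    · have : (N:ℝ) ≤ (N':ℝ) := by exact_mod_cast hNN'
      linarith
    · exact min_le_min le_rfl (pow_le_pow_right₀ (hNcast0 j) (by omega))
    · exact (hmin_pos N j).le
    · positivity
  have hmonoJ : ∀ N, Monotone fun j => A N j := by
    intro N j j' hjj'
    simp only [hA]
    apply mul_le_mul le_rfl
    · apply min_le_min
      · exact pow_le_pow_right₀ (by norm_num) hjj'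
      · apply pow_le_pow_left₀ (by positivity)
        have : (j:ℝ) ≤ (j':ℝ) := by exact_mod_cast hjj'
        linarith
    · exact (hmin_pos N j).le
    · positivity
  -- lower bounds
  have hAgeN : ∀ (N j : ℕ), (N:ℝ) + 1 ≤ A N j := by
    intro N j
    calc (N:ℝ) + 1 = ((N:ℝ) + 1) * 1 := by ring
      _ ≤ A N j := by
          rw [hA]
          exact mul_le_mul le_rfl (hmin_one N j) (by norm_num) (by positivity)
  have hAgeJ : ∀ (N j : ℕ), (j:ℝ) + 1 ≤ A N j := by
    intro N j
    have h2j : (j:ℝ) + 1 ≤ (2:ℝ) ^ j := by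
      have := Nat.lt_two_pow_self (n := j)
      have : ((j:ℕ):ℝ) + 1 ≤ ((2 ^ j : ℕ) : ℝ) := by exact_mod_cast this
      push_cast at this
      linarith
    have hpj : (j:ℝ) + 1 ≤ ((j:ℝ) + 1) ^ (N + 1) :=
      le_self_pow₀ (hNcast0 j) (by omega)
    calc (j:ℝ) + 1 ≤ min ((2:ℝ) ^ j) (((j:ℝ) + 1) ^ (N + 1)) := le_min h2j hpj
      _ ≤ A N j := by
          rw [hA]
          exact le_mul_of_one_le_left (hmin_pos N j).le (hNcast N)
  refine ⟨A, h1, ?_, ?_, ?_, ?_, ?_, ?_⟩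
  · -- (2)
    intro j
    refine ⟨hmonoN j, ?_⟩
    rintro ⟨b, hb⟩
    obtain ⟨N, hN⟩ := exists_nat_gt b
    have := hb (Set.mem_range_self N)
    have := hAgeN N j
    linarith
  · -- (3)
    intro N
    refine ⟨hmonoJ N, ?_⟩
    rintro ⟨b, hb⟩
    obtain ⟨j, hj⟩ := exists_nat_gt b
    have := hb (Set.mem_range_self j)
    have := hAgeJ N j
    linarith
  · -- (4)
    intro N j
    have hk := keymin (N + 1) j
    have hcast : ((j + 1 : ℕ) : ℝ) + 1 = (j : ℝ) + 2 := by push_cast; ring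
    rw [hA]
    simp only [hcast]
    calc ((N:ℝ) + 1) * min ((2:ℝ) ^ (j + 1)) (((j:ℝ) + 2) ^ (N + 1))
        ≤ ((N:ℝ) + 1) * (2 * min ((2:ℝ) ^ j) (((j:ℝ) + 1) ^ (N + 1))) := by
          apply mul_le_mul le_rfl hk (by positivity) (by positivity)
      _ = 2 * (((N:ℝ) + 1) * min ((2:ℝ) ^ j) (((j:ℝ) + 1) ^ (N + 1))) := by ring
  · -- (5)
    intro N
    have hev := ev_pow_le (N + 2)
    have heq : (fun j : ℕ => ((N:ℝ) + 1) / (((N:ℝ) + 2) * ((j:ℝ) + 1))) =ᶠ[atTop]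
        fun j => A N j / A (N + 1) j := by
      filter_upwards [hev] with j hj
      have hj1 : ((j:ℝ) + 1) ^ (N + 1) ≤ 2 ^ j :=
        le_trans (pow_le_pow_right₀ (hNcast0 j) (by omega)) hj
      have hj2 : ((j:ℝ) + 1) ^ (N + 2) ≤ 2 ^ j := hj
      rw [hA]
      simp only [min_eq_right hj1, min_eq_right hj2]
      have hne : ((j:ℝ) + 1) ≠ 0 := by positivity
      push_cast
      rw [pow_succ _ (N + 1)]
      field_simp
      ring
    apply Tendsto.congr' heq
    apply Tendsto.div_atTop tendsto_const_nhds
    apply Tendsto.const_mul_atTop (by positivity : (0:ℝ) < (N:ℝ) + 2)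
    exact tendsto_atTop_add_const_right _ 1 tendsto_natCast_atTop_atTop
  · -- (6)
    intro N
    have hev := ev_pow_le (N + 1)
    have hg : Tendsto (fun j : ℕ => ((N:ℝ) + 1) * ((j:ℝ) + 1) ^ (N + 1) / 2 ^ j) atTop
        (nhds 0) := by
      have h := tendsto_pow_const_div_const_pow_of_one_lt (N + 1) (by norm_num : (1:ℝ) < 2)
      have h2 : Tendsto (fun j : ℕ => ((j + 1 : ℕ) : ℝ) ^ (N + 1) / 2 ^ (j + 1)) atTop
          (nhds 0) := h.comp (tendsto_add_atTop_nat 1)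
      have h3 := h2.const_mul (((N:ℝ) + 1) * 2)
      rw [mul_zero] at h3
      apply h3.congr
      intro j
      have : (0:ℝ) < 2 ^ (j + 1) := by positivity
      push_cast
      rw [pow_succ (2:ℝ) j]
      field_simp
    have hginv : Tendsto (fun j : ℕ => (((N:ℝ) + 1) * ((j:ℝ) + 1) ^ (N + 1) / 2 ^ j)⁻¹)
        atTop atTop := by
      apply Filter.Tendsto.inv_tendsto_nhdsGT_zero
      apply tendsto_nhdsWithin_of_tendsto_nhds_of_eventually_within _ hg
      filter_upwards with j
      have : (0:ℝ) < ((N:ℝ) + 1) * ((j:ℝ) + 1) ^ (N + 1) / 2 ^ j := by positivity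
      exact this
    have heq : (fun j : ℕ => (((N:ℝ) + 1) * ((j:ℝ) + 1) ^ (N + 1) / 2 ^ j)⁻¹) =ᶠ[atTop]
        fun j => (2:ℝ) ^ j / A N j := by
      filter_upwards [hev] with j hj
      rw [hA]
      simp only [min_eq_right hj]
      rw [inv_div]
    exact Tendsto.congr' heq hginv
  · -- (7)
    intro N
    -- get C₁ with (j+1)^N ≤ C₁ * 2^j for all j, C₁ ≥ 1
    obtain ⟨j₀, hj₀⟩ := (ev_pow_le N).exists_forall_of_atTop
    set C₁ : ℝ := ((j₀:ℝ) + 1) ^ N + 1 with hC₁def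
    have hC₁one : (1:ℝ) ≤ C₁ := by
      have : (1:ℝ) ≤ ((j₀:ℝ) + 1) ^ N := one_le_pow₀ (hNcast0 j₀)
      rw [hC₁def]; linarith
    have hC₁ : ∀ j : ℕ, ((j:ℝ) + 1) ^ N ≤ C₁ * 2 ^ j := by
      intro j
      rcases le_or_gt j₀ j with h | h
      · calc ((j:ℝ) + 1) ^ N ≤ 2 ^ j := hj₀ j h
          _ = 1 * 2 ^ j := by ring
          _ ≤ C₁ * 2 ^ j := by
              apply mul_le_mul hC₁one le_rfl (by positivity) (by positivity)
      · have hjle : ((j:ℝ) + 1) ≤ (j₀:ℝ) + 1 := by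
          have : (j:ℝ) ≤ (j₀:ℝ) := by exact_mod_cast h.le
          linarith
        calc ((j:ℝ) + 1) ^ N ≤ ((j₀:ℝ) + 1) ^ N := pow_le_pow_left₀ (by positivity) hjle N
          _ ≤ C₁ := by rw [hC₁def]; linarith
          _ = C₁ * 1 := by ring
          _ ≤ C₁ * 2 ^ j := by
              apply mul_le_mul le_rfl (one_le_pow₀ (by norm_num)) (by norm_num)
                (by linarith)
    set C : ℝ := max C₁ ((N:ℝ) + 1) with hCdef
    have hCpos : (0:ℝ) < C := lt_of_lt_of_le one_pos (le_trans hC₁one (le_max_left _ _))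
    refine ⟨N + 1, C, hCpos, ?_⟩
    intro x hx
    -- termwise bounds
    have hterm1 : ∀ j : ℕ, ((j:ℝ) + 1) ^ N ≤ C * A (N + 1) j := by
      intro j
      have step1 : ((j:ℝ) + 1) ^ N ≤ C₁ * min ((2:ℝ) ^ j) (((j:ℝ) + 1) ^ (N + 1)) := by
        rcases min_cases ((2:ℝ) ^ j) (((j:ℝ) + 1) ^ (N + 1)) with ⟨hm, _⟩ | ⟨hm, _⟩ <;>
          rw [hm]
        · exact hC₁ j
        · calc ((j:ℝ) + 1) ^ N ≤ ((j:ℝ) + 1) ^ (N + 1) :=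
              pow_le_pow_right₀ (hNcast0 j) (by omega)
            _ = 1 * ((j:ℝ) + 1) ^ (N + 1) := by ring
            _ ≤ C₁ * ((j:ℝ) + 1) ^ (N + 1) := by
                apply mul_le_mul hC₁one le_rfl (by positivity) (by linarith)
      have step2 : min ((2:ℝ) ^ j) (((j:ℝ) + 1) ^ (N + 1)) ≤ A (N + 1) j := by
        rw [hA]
        have hc : (((N + 1 : ℕ)):ℝ) + 1 = (N:ℝ) + 1 + 1 := by push_cast; ring
        simp only [hc]
        calc min ((2:ℝ) ^ j) (((j:ℝ) + 1) ^ (N + 1))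
            ≤ min ((2:ℝ) ^ j) (((j:ℝ) + 1) ^ (N + 1 + 1)) :=
              min_le_min le_rfl (pow_le_pow_right₀ (hNcast0 j) (by omega))
          _ ≤ ((N:ℝ) + 1 + 1) * min ((2:ℝ) ^ j) (((j:ℝ) + 1) ^ (N + 1 + 1)) := by
              apply le_mul_of_one_le_left (hmin_pos (N+1) j).le
              linarith [hNcast N]
      calc ((j:ℝ) + 1) ^ N ≤ C₁ * min ((2:ℝ) ^ j) (((j:ℝ) + 1) ^ (N + 1)) := step1
        _ ≤ C * A (N + 1) j := by
            apply mul_le_mul (le_max_left _ _) step2 (hmin_pos N j).le hCpos.le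
    have hterm2 : ∀ j : ℕ, A N j ≤ C * ((j:ℝ) + 1) ^ (N + 1) := by
      intro j
      rw [hA]
      calc ((N:ℝ) + 1) * min ((2:ℝ) ^ j) (((j:ℝ) + 1) ^ (N + 1))
          ≤ ((N:ℝ) + 1) * ((j:ℝ) + 1) ^ (N + 1) := by
            apply mul_le_mul le_rfl (min_le_right _ _) (hmin_pos N j).le (by positivity)
        _ ≤ C * ((j:ℝ) + 1) ^ (N + 1) := by
            apply mul_le_mul (le_max_right _ _) le_rfl (by positivity) hCpos.le
    -- summability
    have hSA : ∀ N' : ℕ, Summable fun j => |x j| * A N' j := by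
      intro N'
      have hdom : Summable fun j => ((N':ℝ) + 1) * (|x j| * ((j:ℝ) + 1) ^ (N' + 1)) :=
        (hx (N' + 1)).mul_left _
      apply hdom.of_nonneg_of_le (fun j => mul_nonneg (abs_nonneg _) (hApos N' j).le)
      · intro j
        rw [hA]
        calc |x j| * (((N':ℝ) + 1) * min ((2:ℝ) ^ j) (((j:ℝ) + 1) ^ (N' + 1)))
            ≤ |x j| * (((N':ℝ) + 1) * ((j:ℝ) + 1) ^ (N' + 1)) := by
              apply mul_le_mul le_rfl ?_ (by positivity) (abs_nonneg _)
              apply mul_le_mul le_rfl (min_le_right _ _) (hmin_pos N' j).le (by positivity)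
          _ = ((N':ℝ) + 1) * (|x j| * ((j:ℝ) + 1) ^ (N' + 1)) := by ring
    constructor
    · have hle : ∀ j : ℕ, |x j| * ((j:ℝ) + 1) ^ N ≤ C * (|x j| * A (N + 1) j) := by
        intro j
        calc |x j| * ((j:ℝ) + 1) ^ N ≤ |x j| * (C * A (N + 1) j) := by
              apply mul_le_mul le_rfl (hterm1 j) (by positivity) (abs_nonneg _)
          _ = C * (|x j| * A (N + 1) j) := by ring
      calc (∑' j, |x j| * ((j:ℝ) + 1) ^ N)
          ≤ ∑' j, C * (|x j| * A (N + 1) j) :=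
            Summable.tsum_le_tsum hle (hx N) ((hSA (N + 1)).mul_left C)
        _ = C * ∑' j, |x j| * A (N + 1) j := tsum_mul_left
    · have hle : ∀ j : ℕ, |x j| * A N j ≤ C * (|x j| * ((j:ℝ) + 1) ^ (N + 1)) := by
        intro j
        calc |x j| * A N j ≤ |x j| * (C * ((j:ℝ) + 1) ^ (N + 1)) := by
              apply mul_le_mul le_rfl (hterm2 j) (hApos N j).le (abs_nonneg _)
          _ = C * (|x j| * ((j:ℝ) + 1) ^ (N + 1)) := by ring
      calc (∑' j, |x j| * A N j)
          ≤ ∑' j, C * (|x j| * ((j:ℝ) + 1) ^ (N + 1)) :=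
            Summable.tsum_le_tsum hle (hSA N) ((hx (N + 1)).mul_left C)
        _ = C * ∑' j, |x j| * ((j:ℝ) + 1) ^ (N + 1) := tsum_mul_left
end

section
/- The map k ↦ Next^k(0,0) is a bijection from ℕ onto ℕ×ℕ; consequently the function pos : ℕ×ℕ → ℕ, defined by pos(n,m) = k iff Next^k(0,0) = (n,m), is well defined. -/
open scoped Classical in
/-- The function `Next` from Definition 4.1, defined from the sequence `(b_n)`. -/
noncomputable def nextFn (b : ℕ → ℕ) : ℕ × ℕ → ℕ × ℕ :=
  fun p =>
    if (∃ n : ℕ, 1 ≤ n ∧ p.1 = b n ∧ Even p.2 ∧ p.2 < 2 * n) ∨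
       (∃ n : ℕ, 1 ≤ n ∧ p.1 = 2 * b n + 1 ∧ Odd p.2 ∧ 0 < p.2 ∧ p.2 ≤ 2 * n) ∨
       (p.1 = 0 ∧ Odd p.2) then
      (p.1, p.2 + 1)
    else if (∃ n : ℕ, 1 ≤ n ∧ p.1 = b n + 1 ∧ Odd p.2 ∧ p.2 < 2 * n) ∨
        (∃ n : ℕ, 1 ≤ n ∧ p.1 = 2 * b n ∧ Even p.2 ∧ 0 < p.2 ∧ p.2 ≤ 2 * n) then
      (p.1, p.2 - 1)
    else if Even p.2 then (p.1 + 1, p.2)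
    else (p.1 - 1, p.2)


/-- Modified sequence with value 0 at index 0. -/
def bb (b : ℕ → ℕ) (n : ℕ) : ℕ := if n = 0 then 0 else b n

/-- Bundle of the hypotheses on `b`. -/
def Good (b : ℕ → ℕ) : Prop :=
  (∀ n, 1 ≤ n → 0 < b n) ∧ (∀ n, 1 ≤ n → b n < b (n + 1)) ∧
    (∀ n, 1 ≤ n → 2 * b n + 1 < b (n + 1))

namespace NextAux

variable {b : ℕ → ℕ}

@[simp] lemma bb_zero : bb b 0 = 0 := rfl

lemma bb_eq {n : ℕ} (h : 1 ≤ n) : bb b n = b n := if_neg (by omega)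

lemma bb_lt_succ (hg : Good b) (n : ℕ) : bb b n < bb b (n + 1) := by
  obtain ⟨h1, h2, h3⟩ := hg
  rcases Nat.eq_zero_or_pos n with rfl | hn
  · simpa [bb] using h1 1 le_rfl
  · rw [bb_eq hn, bb_eq (by omega)]; exact h2 n hn

lemma bb_strictMono (hg : Good b) : StrictMono (bb b) :=
  strictMono_nat_of_lt_succ (bb_lt_succ hg)

lemma bb_mono (hg : Good b) {m n : ℕ} (h : m ≤ n) : bb b m ≤ bb b n :=
  (bb_strictMono hg).monotone h

lemma le_bb (hg : Good b) (n : ℕ) : n ≤ bb b n := by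
  exact (bb_strictMono hg).le_apply

lemma bb_gap (hg : Good b) (n : ℕ) : 2 * bb b n + 1 ≤ bb b (n + 1) := by
  obtain ⟨h1, h2, h3⟩ := hg
  rcases Nat.eq_zero_or_pos n with rfl | hn
  · have := h1 1 le_rfl; simp [bb]; omega
  · rw [bb_eq hn, bb_eq (by omega)]; exact (h3 n hn).le

lemma bb_gap' (hg : Good b) {n : ℕ} (hn : 1 ≤ n) : 2 * bb b n + 2 ≤ bb b (n + 1) := by
  obtain ⟨h1, h2, h3⟩ := hg
  rw [bb_eq hn, bb_eq (by omega)]; have := h3 n hn; omega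

lemma bb_pos (hg : Good b) {n : ℕ} (hn : 1 ≤ n) : 1 ≤ bb b n :=
  le_trans hn (le_bb hg n)

/-- `b n ≠ 2 * b m`. -/
lemma b_ne_two (hg : Good b) {m n : ℕ} (hm : 1 ≤ m) (hn : 1 ≤ n) : b n ≠ 2 * b m := by
  have e1 : bb b n = b n := bb_eq hn
  have e2 : bb b m = b m := bb_eq hm
  rcases lt_trichotomy n m with h | rfl | h
  · have := bb_strictMono hg h; have := bb_pos hg hm; omega
  · have := bb_pos hg hm; omega
  · have h' : m + 1 ≤ n := h
    have := bb_mono hg h'; have := bb_gap hg m; omega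

/-- `b n ≠ 2 * b m + 1`. -/
lemma b_ne_two' (hg : Good b) {m n : ℕ} (hm : 1 ≤ m) (hn : 1 ≤ n) : b n ≠ 2 * b m + 1 := by
  have e1 : bb b n = b n := bb_eq hn
  have e2 : bb b m = b m := bb_eq hm
  rcases lt_trichotomy n m with h | rfl | h
  · have := bb_strictMono hg h; have := bb_pos hg hm; omega
  · have := bb_pos hg hm; omega
  · have h' : m + 1 ≤ n := h
    have := bb_mono hg h'; have := bb_gap' hg hm; omega

/-- `b n + 1 ≠ b m`. -/
lemma b_succ_ne (hg : Good b) {m n : ℕ} (hm : 1 ≤ m) (hn : 1 ≤ n) : b n + 1 ≠ b m := by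
  have e1 : bb b n = b n := bb_eq hn
  have e2 : bb b m = b m := bb_eq hm
  rcases lt_trichotomy n m with h | rfl | h
  · have h' : n + 1 ≤ m := h
    have := bb_mono hg h'; have := bb_gap' hg hn; have := bb_pos hg hn; omega
  · omega
  · have := bb_strictMono hg h; omega

/-- The stage of a column index `i`: the unique `n` with `bb n < i ≤ bb (n+1)` (for `i ≥ 1`). -/
noncomputable def stage (b : ℕ → ℕ) (i : ℕ) : ℕ := sInf {n | i ≤ bb b (n + 1) ∨ n = i}

lemma stage_eq (hg : Good b) {i n : ℕ} (h1 : bb b n < i) (h2 : i ≤ bb b (n + 1)) :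
    stage b i = n := by
  have hmem : n ∈ {k | i ≤ bb b (k + 1) ∨ k = i} := Or.inl h2
  refine le_antisymm (Nat.sInf_le hmem) ?_
  by_contra hlt
  push_neg at hlt
  have hs : stage b i ∈ {k | i ≤ bb b (k + 1) ∨ k = i} :=
    Nat.sInf_mem ⟨n, hmem⟩
  rcases hs with hs | hs
  · have : bb b (stage b i + 1) ≤ bb b n := bb_mono hg (by omega)
    omega
  · have h3 := le_bb hg n
    omega

end NextAux
open NextAux in
/-- Explicit rank function: `posFn b p` is the step at which the path visits `p`. -/
noncomputable def posFn (b : ℕ → ℕ) (p : ℕ × ℕ) : ℕ :=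
  if p.2 % 2 = 0 then
    if p.1 ≤ 2 * bb b ((p.2 + 1) / 2) then
      2 * ((p.2 + 1) / 2) * (bb b ((p.2 + 1) / 2) + 1) + p.1
    else if p.1 ≤ 2 * bb b (stage b p.1) ∨ p.2 = 0 then
      2 * stage b p.1 * (bb b (stage b p.1) + 1) + 2 * bb b (stage b p.1) +
        (2 * stage b p.1 - 1 - p.2) * bb b (stage b p.1) + 1 + (p.1 - bb b (stage b p.1) - 1)
    else
      4 * stage b p.1 * bb b (stage b p.1) + 2 * stage b p.1 + bb b (stage b p.1 + 1) +
        (p.2 - 1) * (bb b (stage b p.1 + 1) - 2 * bb b (stage b p.1)) + 1 +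
        (p.1 - 2 * bb b (stage b p.1) - 1)
  else
    if p.1 ≤ bb b ((p.2 + 1) / 2) then
      2 * ((p.2 + 1) / 2) * (bb b ((p.2 + 1) / 2) + 1) - 1 - p.1
    else if p.1 ≤ 2 * bb b (stage b p.1) then
      2 * stage b p.1 * (bb b (stage b p.1) + 1) + 2 * bb b (stage b p.1) +
        (2 * stage b p.1 - 1 - p.2) * bb b (stage b p.1) + 1 + (2 * bb b (stage b p.1) - p.1)
    else
      4 * stage b p.1 * bb b (stage b p.1) + 2 * stage b p.1 + bb b (stage b p.1 + 1) +
        (p.2 - 1) * (bb b (stage b p.1 + 1) - 2 * bb b (stage b p.1)) + 1 +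
        (bb b (stage b p.1 + 1) - p.1)

namespace NextAux

variable {b : ℕ → ℕ}

lemma posFn_e1 {i j : ℕ} (hj : j % 2 = 0) (hi : i ≤ 2 * bb b ((j + 1) / 2)) :
    posFn b (i, j) = 2 * ((j + 1) / 2) * (bb b ((j + 1) / 2) + 1) + i := by
  simp only [posFn]
  rw [if_pos hj, if_pos hi]

lemma posFn_e2 {i j n : ℕ} (hj : j % 2 = 0) (hi : ¬ i ≤ 2 * bb b ((j + 1) / 2))
    (hn : stage b i = n) (hb : i ≤ 2 * bb b n ∨ j = 0) :
    posFn b (i, j) = 2 * n * (bb b n + 1) + 2 * bb b n +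
      (2 * n - 1 - j) * bb b n + 1 + (i - bb b n - 1) := by
  simp only [posFn, hn]
  rw [if_pos hj, if_neg hi, if_pos hb]

lemma posFn_e3 {i j n : ℕ} (hj : j % 2 = 0) (hi : ¬ i ≤ 2 * bb b ((j + 1) / 2))
    (hn : stage b i = n) (hb : ¬ (i ≤ 2 * bb b n ∨ j = 0)) :
    posFn b (i, j) = 4 * n * bb b n + 2 * n + bb b (n + 1) +
      (j - 1) * (bb b (n + 1) - 2 * bb b n) + 1 + (i - 2 * bb b n - 1) := by
  simp only [posFn, hn]
  rw [if_pos hj, if_neg hi, if_neg hb]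

lemma posFn_o1 {i j : ℕ} (hj : ¬ j % 2 = 0) (hi : i ≤ bb b ((j + 1) / 2)) :
    posFn b (i, j) = 2 * ((j + 1) / 2) * (bb b ((j + 1) / 2) + 1) - 1 - i := by
  simp only [posFn]
  rw [if_neg hj, if_pos hi]

lemma posFn_o2 {i j n : ℕ} (hj : ¬ j % 2 = 0) (hi : ¬ i ≤ bb b ((j + 1) / 2))
    (hn : stage b i = n) (hb : i ≤ 2 * bb b n) :
    posFn b (i, j) = 2 * n * (bb b n + 1) + 2 * bb b n +
      (2 * n - 1 - j) * bb b n + 1 + (2 * bb b n - i) := by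
  simp only [posFn, hn]
  rw [if_neg hj, if_neg hi, if_pos hb]

lemma posFn_o3 {i j n : ℕ} (hj : ¬ j % 2 = 0) (hi : ¬ i ≤ bb b ((j + 1) / 2))
    (hn : stage b i = n) (hb : ¬ i ≤ 2 * bb b n) :
    posFn b (i, j) = 4 * n * bb b n + 2 * n + bb b (n + 1) +
      (j - 1) * (bb b (n + 1) - 2 * bb b n) + 1 + (bb b (n + 1) - i) := by
  simp only [posFn, hn]
  rw [if_neg hj, if_neg hi, if_neg hb]

end NextAux
namespace NextAux

variable {b : ℕ → ℕ}

lemma next_surj (hg : Good b) (p : ℕ × ℕ) (hp : p ≠ (0, 0)) :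
    ∃ q, nextFn b q = p := by
  obtain ⟨h1, h2, h3⟩ := id hg
  obtain ⟨i, j⟩ := p
  rcases Nat.even_or_odd j with hje | hjo
  · have hj2 : j % 2 = 0 := Nat.even_iff.mp hje
    rcases Nat.eq_zero_or_pos j with rfl | hj0
    · -- j = 0, i ≥ 1
      have hi : 1 ≤ i := by
        rcases Nat.eq_zero_or_pos i with rfl | h
        · exact absurd rfl hp
        · exact h
      by_cases hcase : ∃ n, 1 ≤ n ∧ i = b n + 1
      · obtain ⟨n, hn, rfl⟩ := hcase
        refine ⟨(b n + 1, 1), ?_⟩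
        simp only [nextFn]
        rw [if_neg, if_pos (Or.inl ⟨n, hn, rfl, odd_one, by omega⟩)]
        rintro (⟨m, hm, _, he, _⟩ | ⟨m, hm, hie, _, _, _⟩ | ⟨h0, _⟩)
        · exact (by omega : ¬ (1 % 2 = 0)) (Nat.even_iff.mp he)
        · exact b_ne_two hg hm hn (by omega)
        · omega
      · refine ⟨(i - 1, 0), ?_⟩
        simp only [nextFn]
        rw [if_neg, if_neg, if_pos Even.zero]
        · simpa using by omega
        · rintro (⟨m, hm, _, ho, _⟩ | ⟨m, hm, _, _, h0, _⟩)
          · exact (by omega : ¬ (0 % 2 = 1)) (Nat.odd_iff.mp ho)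
          · omega
        · rintro (⟨m, hm, hie, _, _⟩ | ⟨m, hm, _, ho, _, _⟩ | ⟨_, ho⟩)
          · exact hcase ⟨m, hm, by omega⟩
          · exact (by omega : ¬ (0 % 2 = 1)) (Nat.odd_iff.mp ho)
          · exact (by omega : ¬ (0 % 2 = 1)) (Nat.odd_iff.mp ho)
    · -- j even, j ≥ 2
      rcases Nat.eq_zero_or_pos i with rfl | hi
      · refine ⟨(0, j - 1), ?_⟩
        simp only [nextFn]
        rw [if_pos (Or.inr (Or.inr ⟨rfl, Nat.odd_iff.mpr (by omega)⟩))]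
        simpa using by omega
      · by_cases hc1 : ∃ n, 1 ≤ n ∧ i = 2 * b n + 1 ∧ j ≤ 2 * n
        · obtain ⟨n, hn, rfl, hjn⟩ := hc1
          refine ⟨(2 * b n + 1, j - 1), ?_⟩
          simp only [nextFn]
          rw [if_pos (Or.inr (Or.inl ⟨n, hn, rfl, Nat.odd_iff.mpr (by omega), by omega, by omega⟩))]
          simpa using by omega
        · by_cases hc2 : ∃ n, 1 ≤ n ∧ i = b n + 1 ∧ j + 2 ≤ 2 * n
          · obtain ⟨n, hn, rfl, hjn⟩ := hc2
            refine ⟨(b n + 1, j + 1), ?_⟩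
            simp only [nextFn]
            rw [if_neg, if_pos (Or.inl ⟨n, hn, rfl, Nat.odd_iff.mpr (by omega), by omega⟩)]
            · simp
            rintro (⟨m, hm, hie, he, _⟩ | ⟨m, hm, hie, _, _, _⟩ | ⟨h0, _⟩)
            · exact (by omega : ¬ ((j+1) % 2 = 0)) (Nat.even_iff.mp he)
            · exact b_ne_two hg hm hn (by omega)
            · omega
          · refine ⟨(i - 1, j), ?_⟩
            simp only [nextFn]
            rw [if_neg, if_neg, if_pos hje]
            · simpa using by omega
            · rintro (⟨m, hm, hie, ho, _⟩ | ⟨m, hm, hie, _, _, hjm⟩)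
              · exact (by omega : ¬ (j % 2 = 1)) (Nat.odd_iff.mp ho)
              · exact hc1 ⟨m, hm, by omega, hjm⟩
            · rintro (⟨m, hm, hie, _, hjm⟩ | ⟨m, hm, _, ho, _, _⟩ | ⟨_, ho⟩)
              · exact hc2 ⟨m, hm, by omega, by omega⟩
              · exact (by omega : ¬ (j % 2 = 1)) (Nat.odd_iff.mp ho)
              · exact (by omega : ¬ (j % 2 = 1)) (Nat.odd_iff.mp ho)
  · -- j odd
    have hj2 : j % 2 = 1 := Nat.odd_iff.mp hjo
    by_cases hc1 : ∃ n, 1 ≤ n ∧ i = b n ∧ j < 2 * n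
    · obtain ⟨n, hn, rfl, hjn⟩ := hc1
      refine ⟨(b n, j - 1), ?_⟩
      simp only [nextFn]
      rw [if_pos (Or.inl ⟨n, hn, rfl, Nat.even_iff.mpr (by omega), by omega⟩)]
      simpa using by omega
    · by_cases hc2 : ∃ n, 1 ≤ n ∧ i = 2 * b n ∧ j < 2 * n
      · obtain ⟨n, hn, rfl, hjn⟩ := hc2
        refine ⟨(2 * b n, j + 1), ?_⟩
        simp only [nextFn]
        rw [if_neg, if_pos (Or.inr ⟨n, hn, rfl, Nat.even_iff.mpr (by omega), by omega, by omega⟩)]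
        · simp
        rintro (⟨m, hm, hie, _, _⟩ | ⟨m, hm, _, ho, _, _⟩ | ⟨h0, _⟩)
        · exact b_ne_two hg hn hm hie.symm
        · exact (by omega : ¬ ((j+1) % 2 = 1)) (Nat.odd_iff.mp ho)
        · have := h1 n hn; omega
      · refine ⟨(i + 1, j), ?_⟩
        simp only [nextFn]
        rw [if_neg, if_neg, if_neg (by
          intro he; exact (by omega : ¬ (j % 2 = 0)) (Nat.even_iff.mp he))]
        · simp
        · rintro (⟨m, hm, hie, _, hjm⟩ | ⟨m, hm, _, he, _, _⟩)
          · exact hc1 ⟨m, hm, by omega, hjm⟩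
          · exact (by omega : ¬ (j % 2 = 0)) (Nat.even_iff.mp he)
        · rintro (⟨m, hm, _, he, _⟩ | ⟨m, hm, hie, _, _, hjm⟩ | ⟨_, _⟩)
          · exact (by omega : ¬ (j % 2 = 0)) (Nat.even_iff.mp he)
          · exact hc2 ⟨m, hm, by omega, by omega⟩
          · omega

end NextAux
namespace NextAux

variable {b : ℕ → ℕ}

lemma stage_spec (hg : Good b) {i : ℕ} (hi : 1 ≤ i) :
    bb b (stage b i) < i ∧ i ≤ bb b (stage b i + 1) := by
  have hmem : i ∈ {n | i ≤ bb b (n + 1) ∨ n = i} := Or.inl (le_of_lt (le_bb hg (i + 1)))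
  have hs : stage b i ∈ {n | i ≤ bb b (n + 1) ∨ n = i} := Nat.sInf_mem ⟨i, hmem⟩
  have h2 : i ≤ bb b (stage b i + 1) := by
    rcases hs with hs | hs
    · exact hs
    · rw [hs]; exact le_of_lt (le_bb hg (i + 1))
  refine ⟨?_, h2⟩
  rcases Nat.eq_zero_or_pos (stage b i) with h0 | h0
  · rw [h0]; simp; omega
  · obtain ⟨k, hk⟩ : ∃ k, stage b i = k + 1 := ⟨stage b i - 1, by omega⟩
    have hns : k ∉ {n | i ≤ bb b (n + 1) ∨ n = i} := Nat.notMem_of_lt_sInf (by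
      change k < stage b i; omega)
    simp only [Set.mem_setOf_eq, not_or] at hns
    rw [hk]
    push_neg at hns
    exact hns.1

/-- Move U3 : `(0, 2t+1) → (0, 2t+2)`. -/
lemma posnext_U3 (hg : Good b) (t : ℕ) :
    posFn b (0, 2 * t + 2) = posFn b (0, 2 * t + 1) + 1 := by
  have hI1 : (2 * t + 2 + 1) / 2 = t + 1 := by omega
  have hI2 : (2 * t + 1 + 1) / 2 = t + 1 := by omega
  rw [posFn_e1 (by omega) (by simp), posFn_o1 (by omega) (by simp), hI1, hI2]
  have hQ : 2 * (bb b (t + 1)) + 2 ≤ 2 * (t + 1) * (bb b (t + 1) + 1) := by nlinarith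
  generalize 2 * (t + 1) * (bb b (t + 1) + 1) = Q at hQ ⊢
  omega

/-- Move U2 : `(2bₙ+1, 2t+1) → (2bₙ+1, 2t+2)` for `2t+1 ≤ 2n`. -/
lemma posnext_U2 (hg : Good b) {n t : ℕ} (hn : 1 ≤ n) (hle : 2 * t + 1 ≤ 2 * n) :
    posFn b (2 * b n + 1, 2 * t + 2) = posFn b (2 * b n + 1, 2 * t + 1) + 1 := by
  have hbb : bb b n = b n := bb_eq hn
  have hbb1 : bb b (n + 1) = b (n + 1) := bb_eq (by omega)
  have hpos : 1 ≤ b n := by have := bb_pos hg hn; omega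
  have hgap : 2 * bb b n + 2 ≤ bb b (n + 1) := bb_gap' hg hn
  have hstage : stage b (2 * b n + 1) = n := stage_eq hg (by omega) (by omega)
  have hI1 : (2 * t + 2 + 1) / 2 = t + 1 := by omega
  have hI2 : (2 * t + 1 + 1) / 2 = t + 1 := by omega
  have htn : t + 1 ≤ n := by omega
  have hmono : bb b (t + 1) ≤ bb b n := bb_mono hg htn
  rw [posFn_e3 (by omega) (by rw [hI1]; omega) hstage (by omega),
      posFn_o3 (by omega) (by rw [hI2]; omega) hstage (by omega)]
  zify [show 2 * bb b n ≤ bb b (n+1) by omega, show 1 ≤ 2*t+2 by omega,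
    show 1 ≤ 2*t+1 by omega, show 2 * b n + 1 ≤ bb b (n+1) by omega,
    show 2 * bb b n + 1 ≤ 2 * b n + 1 by omega]
  ring_nf
  omega

/-- Move D1 : `(bₙ+1, 2t+1) → (bₙ+1, 2t)` for `2t+1 < 2n`. -/
lemma posnext_D1 (hg : Good b) {n t : ℕ} (hn : 1 ≤ n) (hlt : 2 * t + 1 < 2 * n) :
    posFn b (b n + 1, 2 * t) = posFn b (b n + 1, 2 * t + 1) + 1 := by
  have hbb : bb b n = b n := bb_eq hn
  have hpos : 1 ≤ b n := by have := bb_pos hg hn; omega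
  have hgap : 2 * bb b n + 1 ≤ bb b (n + 1) := bb_gap hg n
  have hstage : stage b (b n + 1) = n := stage_eq hg (by omega) (by omega)
  have hI1 : (2 * t + 1) / 2 = t := by omega
  have hI2 : (2 * t + 1 + 1) / 2 = t + 1 := by omega
  have htn : t + 1 ≤ n := by omega
  have hmono1 : bb b (t + 1) ≤ bb b n := bb_mono hg htn
  have hmono2 : 2 * bb b t + 1 ≤ bb b (t + 1) := bb_gap hg t
  rw [posFn_e2 (by omega) (by rw [hI1]; omega) hstage (Or.inl (by omega)),
      posFn_o2 (by omega) (by rw [hI2]; omega) hstage (by omega)]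
  have h5 : 2 * n - 1 - 2 * t = (2 * n - 1 - (2 * t + 1)) + 1 := by omega
  rw [h5, add_mul, one_mul]
  generalize (2 * n - 1 - (2 * t + 1)) * bb b n = P
  generalize 2 * n * (bb b n + 1) = Q
  omega

/-- Move D2 : `(2bₙ, 2t+2) → (2bₙ, 2t+1)` for `2t+2 ≤ 2n`. -/
lemma posnext_D2 (hg : Good b) {n t : ℕ} (hn : 1 ≤ n) (hle : 2 * t + 2 ≤ 2 * n) :
    posFn b (2 * b n, 2 * t + 1) = posFn b (2 * b n, 2 * t + 2) + 1 := by
  have hbb : bb b n = b n := bb_eq hn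
  have hpos : 1 ≤ b n := by have := bb_pos hg hn; omega
  have hgap : 2 * bb b n + 1 ≤ bb b (n + 1) := bb_gap hg n
  have hstage : stage b (2 * b n) = n := stage_eq hg (by omega) (by omega)
  have hI1 : (2 * t + 1 + 1) / 2 = t + 1 := by omega
  have hI2 : (2 * t + 2 + 1) / 2 = t + 1 := by omega
  have htn : t + 1 ≤ n := by omega
  have hmono1 : bb b (t + 1) ≤ bb b n := bb_mono hg htn
  rcases eq_or_lt_of_le htn with heq | hlt
  · -- t + 1 = n : row 2n, left part, e1
    rw [posFn_o2 (by omega) (by rw [hI1]; omega) hstage (by omega),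
        posFn_e1 (by omega) (by rw [hI2, heq]; omega)]
    rw [hI2, heq]
    rw [show 2 * n - 1 - (2 * t + 1) = 0 by omega, zero_mul]
    generalize 2 * n * (bb b n + 1) = Q
    omega
  · -- t + 1 < n
    have hmono2 : bb b (t + 1) < bb b n := bb_strictMono hg hlt
    rw [posFn_o2 (by omega) (by rw [hI1]; omega) hstage (by omega),
        posFn_e2 (by omega) (by rw [hI2]; omega) hstage (Or.inl (by omega))]
    have h5 : 2 * n - 1 - (2 * t + 1) = (2 * n - 1 - (2 * t + 2)) + 1 := by omega
    rw [h5, add_mul, one_mul]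
    generalize (2 * n - 1 - (2 * t + 2)) * bb b n = P
    generalize 2 * n * (bb b n + 1) = Q
    omega

end NextAux
namespace NextAux

variable {b : ℕ → ℕ}

/-- Move U1 : `(bₙ, 2t) → (bₙ, 2t+1)` for `2t < 2n`. -/
lemma posnext_U1 (hg : Good b) {n t : ℕ} (hn : 1 ≤ n) (hlt : 2 * t < 2 * n) :
    posFn b (b n, 2 * t + 1) = posFn b (b n, 2 * t) + 1 := by
  obtain ⟨s, rfl⟩ : ∃ s, n = s + 1 := ⟨n - 1, by omega⟩
  have hbb1 : bb b (s + 1) = b (s + 1) := bb_eq hn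
  have hpos : 1 ≤ b (s + 1) := by have := bb_pos hg hn; omega
  have hgap : 2 * bb b s + 1 ≤ bb b (s + 1) := bb_gap hg s
  have hstage : stage b (b (s + 1)) = s :=
    stage_eq hg (by have := bb_lt_succ hg s; omega) (by omega)
  have hI1 : (2 * t + 1) / 2 = t := by omega
  have hI2 : (2 * t + 1 + 1) / 2 = t + 1 := by omega
  have hts : t ≤ s := by omega
  have hmono1 : bb b t ≤ bb b s := bb_mono hg hts
  have hmono2 : bb b (t + 1) ≤ bb b (s + 1) := bb_mono hg (by omega)
  -- pos p in unified form R + 2t·w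
  have hposp : posFn b (b (s + 1), 2 * t) =
      4 * s * bb b s + 2 * s + bb b (s + 1) +
        2 * t * (bb b (s + 1) - 2 * bb b s) := by
    rcases Nat.eq_zero_or_pos t with rfl | ht
    · rw [posFn_e2 (by omega) (by rw [hI1]; simp; omega) hstage (Or.inr rfl)]
      rcases Nat.eq_zero_or_pos s with rfl | hs
      · have hpos' : 1 ≤ b 1 := hpos
        have h1 : bb b 1 = b 1 := bb_eq le_rfl
        simp [bb_zero]; omega
      · rw [hbb1]
        zify [show 1 ≤ 2*s by omega, show bb b s + 1 ≤ b (s+1) by omega,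
          show bb b s ≤ b (s+1) by omega, show 1 ≤ b (s+1) - bb b s by omega,
          show 2 * bb b s ≤ bb b (s+1) by omega, show (2:ℕ)*0 ≤ 2*s-1 by omega]
        ring
    · rw [posFn_e3 (by omega) (by rw [hI1]; omega) hstage (by omega), hbb1]
      zify [show 1 ≤ 2*t by omega, show 2 * bb b s ≤ bb b (s+1) by omega,
        show 2 * bb b s ≤ b (s+1) by omega, show 1 ≤ b (s+1) - 2 * bb b s by omega,
        show 1 ≤ bb b (s+1) - 2 * bb b s by omega]
      ring
  rcases eq_or_lt_of_le (show t + 1 ≤ s + 1 by omega) with heq | hlt2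
  · -- t = s : next lands in left region, o1
    have hts' : t = s := by omega
    subst hts'
    have haux : 1 + b (t+1) ≤ 2*(t+1)*(b (t+1)+1) := by nlinarith
    rw [hposp, posFn_o1 (by omega) (by rw [hI2]; omega), hI2, hbb1, Nat.sub_sub,
      Nat.sub_eq_iff_eq_add haux]
    zify [show 2 * bb b t ≤ b (t+1) by omega]
    ring
  · -- t + 1 ≤ s : next in phase 4, o3
    have hmono3 : bb b (t + 1) ≤ bb b s := bb_mono hg (by omega)
    rw [hposp, posFn_o3 (by omega) (by rw [hI2]; omega) hstage (by omega), hbb1]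
    zify [show 1 ≤ 2*t+1 by omega, show 2 * bb b s ≤ bb b (s+1) by omega,
      Nat.sub_self, show b (s+1) ≤ bb b (s+1) by omega]
    ring

end NextAux
namespace NextAux

variable {b : ℕ → ℕ}

/-- Move R : `(i, 2t) → (i+1, 2t)` when no condition fires. -/
lemma posnext_R (hg : Good b) {i t : ℕ}
    (hU1 : ∀ m, 1 ≤ m → i = b m → 2 * t < 2 * m → False)
    (hD2 : ∀ m, 1 ≤ m → i = 2 * b m → 0 < 2 * t → 2 * t ≤ 2 * m → False) :
    posFn b (i + 1, 2 * t) = posFn b (i, 2 * t) + 1 := by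
  have hI : (2 * t + 1) / 2 = t := by omega
  by_cases hL : i + 1 ≤ 2 * bb b t
  · rw [posFn_e1 (by omega) (by rw [hI]; omega), posFn_e1 (by omega) (by rw [hI]; omega), hI]
    generalize 2 * t * (bb b t + 1) = Q
    omega
  · rcases Nat.eq_zero_or_pos t with rfl | ht
    · -- j = 0
      rcases Nat.eq_zero_or_pos i with rfl | hi
      · -- (0,0) → (1,0)
        have hb1 : 1 ≤ bb b 1 := bb_pos hg le_rfl
        have hstage1 : stage b 1 = 0 := stage_eq hg (by simp) hb1
        rw [posFn_e2 (by omega) (by simp [bb]) hstage1 (Or.inr rfl),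
            posFn_e1 (by omega) (by simp [bb])]
        simp [bb]
      · -- i ≥ 1, j = 0
        obtain ⟨hs1, hs2⟩ := stage_spec hg hi
        set n := stage b i with hs
        have hne : i < bb b (n + 1) := by
          rcases eq_or_lt_of_le hs2 with heq | h
          · exact absurd heq (fun heq => hU1 (n + 1) (by omega)
              (by rw [heq]; exact bb_eq (by omega)) (by omega))
          · exact h
        have hstage' : stage b (i + 1) = n := stage_eq hg (by omega) (by omega)
        rw [posFn_e2 (by omega) (by rw [hI]; simp [bb]) hstage' (Or.inr rfl),
            posFn_e2 (by omega) (by rw [hI]; simp [bb]; omega) hs.symm (Or.inr rfl)]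
        generalize (2 * n - 1 - 2 * 0) * bb b n = P
        generalize 2 * n * (bb b n + 1) = Q
        omega
    · -- t ≥ 1
      have hbt : 1 ≤ bb b t := bb_pos hg ht
      have hgt : 2 * bb b t < i := by
        rcases Nat.lt_or_ge (2 * bb b t) i with h | h
        · exact h
        · exfalso
          have : i = 2 * bb b t := by omega
          exact hD2 t ht (by rw [this, bb_eq ht]) (by omega) (by omega)
      obtain ⟨hs1, hs2⟩ := stage_spec hg (show 1 ≤ i by omega)
      set n := stage b i with hs
      by_cases hmid : i ≤ 2 * bb b n
      · -- phase 2
        have htn : t < n := (bb_strictMono hg).lt_iff_lt.mp (by omega)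
        have hn1 : 1 ≤ n := by omega
        have hgap : 2 * bb b n + 1 ≤ bb b (n + 1) := bb_gap hg n
        have hi2 : i + 1 ≤ 2 * bb b n := by
          rcases eq_or_lt_of_le hmid with heq | h
          · exact absurd heq (fun heq => hD2 n hn1 (by rw [heq, bb_eq hn1]) (by omega) (by omega))
          · exact h
        have hstage' : stage b (i + 1) = n := stage_eq hg (by omega) (by omega)
        rw [posFn_e2 (by omega) (by rw [hI]; omega) hstage' (Or.inl (by omega)),
            posFn_e2 (by omega) (by rw [hI]; omega) hs.symm (Or.inl (by omega))]
        generalize (2 * n - 1 - 2 * t) * bb b n = P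
        generalize 2 * n * (bb b n + 1) = Q
        omega
      · -- phase 4
        have htn : t < n + 1 := (bb_strictMono hg).lt_iff_lt.mp (by omega)
        have hne : i < bb b (n + 1) := by
          rcases eq_or_lt_of_le hs2 with heq | h
          · exact absurd heq (fun heq => hU1 (n + 1) (by omega)
              (by rw [heq]; exact bb_eq (by omega)) (by omega))
          · exact h
        have hstage' : stage b (i + 1) = n := stage_eq hg (by omega) (by omega)
        rw [posFn_e3 (by omega) (by rw [hI]; omega) hstage' (by omega),
            posFn_e3 (by omega) (by rw [hI]; omega) hs.symm (by omega)]
        generalize (2 * t - 1) * (bb b (n + 1) - 2 * bb b n) = P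
        generalize 4 * n * bb b n = Q
        omega

/-- Move L : `(i, 2t+1) → (i-1, 2t+1)` when no condition fires. -/
lemma posnext_L (hg : Good b) {i t : ℕ} (hi0 : 1 ≤ i)
    (hU2 : ∀ m, 1 ≤ m → i = 2 * b m + 1 → 2 * t + 1 ≤ 2 * m → False)
    (hD1 : ∀ m, 1 ≤ m → i = b m + 1 → 2 * t + 1 < 2 * m → False) :
    posFn b (i - 1, 2 * t + 1) = posFn b (i, 2 * t + 1) + 1 := by
  have hI : (2 * t + 1 + 1) / 2 = t + 1 := by omega
  by_cases hL : i ≤ bb b (t + 1)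
  · rw [posFn_o1 (by omega) (by rw [hI]; omega), posFn_o1 (by omega) (by rw [hI]; omega), hI]
    have haux : 2 * bb b (t + 1) + 2 ≤ 2 * (t + 1) * (bb b (t + 1) + 1) := by nlinarith
    generalize 2 * (t + 1) * (bb b (t + 1) + 1) = Q at haux ⊢
    omega
  · have hgt : bb b (t + 1) + 2 ≤ i := by
      rcases Nat.lt_or_ge (bb b (t + 1) + 1) i with h | h
      · omega
      · exfalso
        have : i = bb b (t + 1) + 1 := by omega
        exact hD1 (t + 1) (by omega) (by rw [this, bb_eq (by omega)]) (by omega)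
    obtain ⟨hs1, hs2⟩ := stage_spec hg (show 1 ≤ i by omega)
    set n := stage b i with hs
    have htn : t + 1 ≤ n := by
      have := (bb_strictMono hg).lt_iff_lt.mp (show bb b (t + 1) < bb b (n + 1) by omega)
      omega
    have hn1 : 1 ≤ n := by omega
    by_cases hmid : i ≤ 2 * bb b n
    · -- phase 2
      have hne : bb b n + 2 ≤ i := by
        rcases Nat.lt_or_ge (bb b n + 1) i with h | h
        · omega
        · exfalso
          have : i = bb b n + 1 := by omega
          exact hD1 n hn1 (by rw [this, bb_eq hn1]) (by omega)
      have hstage' : stage b (i - 1) = n := stage_eq hg (by omega) (by omega)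
      rw [posFn_o2 (by omega) (by rw [hI]; omega) hstage' (by omega),
          posFn_o2 (by omega) (by rw [hI]; omega) hs.symm (by omega)]
      generalize (2 * n - 1 - (2 * t + 1)) * bb b n = P
      generalize 2 * n * (bb b n + 1) = Q
      omega
    · -- phase 4
      have hne : 2 * bb b n + 2 ≤ i := by
        rcases Nat.lt_or_ge (2 * bb b n + 1) i with h | h
        · omega
        · exfalso
          have : i = 2 * bb b n + 1 := by omega
          exact hU2 n hn1 (by rw [this, bb_eq hn1]) (by omega)
      have hstage' : stage b (i - 1) = n := stage_eq hg (by omega) (by omega)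
      rw [posFn_o3 (by omega) (by rw [hI]; omega) hstage' (by omega),
          posFn_o3 (by omega) (by rw [hI]; omega) hs.symm (by omega)]
      generalize (2 * t + 1 - 1) * (bb b (n + 1) - 2 * bb b n) = P
      generalize 4 * n * bb b n = Q
      omega

end NextAux
namespace NextAux

variable {b : ℕ → ℕ}

open scoped Classical in
lemma pos_next (hg : Good b) (p : ℕ × ℕ) : posFn b (nextFn b p) = posFn b p + 1 := by
  obtain ⟨i, j⟩ := p
  simp only [nextFn]
  split_ifs with hC1 hC2 hpar
  · -- up move
    rcases hC1 with ⟨n, hn, hie, hev, hlt⟩ | ⟨n, hn, hie, hodd, hj0, hle⟩ | ⟨hie, hodd⟩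
    · obtain ⟨t, rfl⟩ := hev
      subst hie
      rw [show t + t = 2 * t from by ring]
      exact posnext_U1 hg hn (by omega)
    · obtain ⟨t, rfl⟩ := hodd
      subst hie
      exact posnext_U2 hg hn hle
    · obtain ⟨t, rfl⟩ := hodd
      subst hie
      exact posnext_U3 hg t
  · -- down move
    rcases hC2 with ⟨n, hn, hie, hodd, hlt⟩ | ⟨n, hn, hie, hev, hj0, hle⟩
    · obtain ⟨t, rfl⟩ := hodd
      subst hie
      exact posnext_D1 hg hn hlt
    · obtain ⟨t, rfl⟩ := hev
      obtain ⟨u, rfl⟩ : ∃ u, t = u + 1 := ⟨t - 1, by omega⟩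
      subst hie
      rw [show u + 1 + (u + 1) = 2 * u + 2 from by ring]
      exact posnext_D2 hg hn (by omega)
  · -- right move
    obtain ⟨t, rfl⟩ := hpar
    rw [show t + t = 2 * t from by ring]
    refine posnext_R hg ?_ ?_
    · intro m hm hie hlt
      exact hC1 (Or.inl ⟨m, hm, hie, ⟨t, by ring⟩, by omega⟩)
    · intro m hm hie h0 hle
      exact hC2 (Or.inr ⟨m, hm, hie, ⟨t, by ring⟩, by omega, by omega⟩)
  · -- left move
    have hodd : Odd j := Nat.not_even_iff_odd.mp hpar
    obtain ⟨t, rfl⟩ := hodd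
    refine posnext_L hg ?_ ?_ ?_
    · by_contra h
      exact hC1 (Or.inr (Or.inr ⟨by omega, ⟨t, rfl⟩⟩))
    · intro m hm hie hle
      exact hC1 (Or.inr (Or.inl ⟨m, hm, hie, ⟨t, rfl⟩, by omega, by omega⟩))
    · intro m hm hie hlt
      exact hC2 (Or.inl ⟨m, hm, hie, ⟨t, rfl⟩, by omega⟩)

lemma pos_zero : posFn b (0, 0) = 0 := by
  rw [posFn_e1 (by omega) (by simp [bb])]
  simp

end NextAux
/-- The map `k ↦ Next^k (0,0)` is a bijection from `ℕ` onto `ℕ × ℕ`; consequently the function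
`pos`, defined by `pos (n, m) = k` iff `Next^k (0,0) = (n, m)`, is well defined. -/
theorem next_iterate_bijective (b : ℕ → ℕ)
    (hbpos : ∀ n, 1 ≤ n → 0 < b n)
    (hbmono : ∀ n, 1 ≤ n → b n < b (n + 1))
    (hbgap : ∀ n, 1 ≤ n → 2 * b n + 1 < b (n + 1)) :
    Function.Bijective (fun k : ℕ => (nextFn b)^[k] (0, 0)) := by
  have hg : Good b := ⟨hbpos, hbmono, hbgap⟩
  have h0 : posFn b (0, 0) = 0 := NextAux.pos_zero
  have horb : ∀ k : ℕ, posFn b ((nextFn b)^[k] (0, 0)) = k := by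
    intro k
    induction k with
    | zero => simpa using h0
    | succ k ih => rw [Function.iterate_succ_apply', NextAux.pos_next hg, ih]
  constructor
  · intro k l hkl
    have hkl' : (nextFn b)^[k] (0, 0) = (nextFn b)^[l] (0, 0) := hkl
    have hk := horb k
    rw [hkl', horb l] at hk
    omega
  · have key : ∀ N q, posFn b q = N → (nextFn b)^[N] (0, 0) = q := by
      intro N
      induction N using Nat.strong_induction_on with
      | _ N ih =>
        intro q hq
        by_cases hzero : q = (0, 0)
        · subst hzero
          have hN : N = 0 := by omega
          subst hN
          rfl
        · obtain ⟨r, rfl⟩ := NextAux.next_surj hg q hzero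
          have hr : posFn b r + 1 = N := by rw [← hq, NextAux.pos_next hg]
          obtain ⟨M, rfl⟩ : ∃ M, N = M + 1 := ⟨posFn b r, hr.symm⟩
          rw [Function.iterate_succ_apply', ih M (by omega) r (by omega)]
    exact fun p => ⟨posFn b p, key (posFn b p) p rfl⟩
end

section
/- For every n ∈ ℕ, pos(Δ_{n+1},0) = pos(a_n,0) + pos(Δ_n,0). -/
/-- `pos (Δ_{n+1}, 0) = pos (a_n, 0) + pos (Δ_n, 0)`. -/
theorem pos_delta_succ (b : ℕ → ℕ) (pos : ℕ × ℕ → ℕ) (a Δ : ℕ → ℕ)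
    (hbpos : ∀ n, 1 ≤ n → 0 < b n)
    (hbmono : ∀ n, 1 ≤ n → b n < b (n + 1))
    (hbgap : ∀ n, 1 ≤ n → 2 * b n + 1 < b (n + 1))
    (hpos : ∀ p k, pos p = k ↔ (nextFn b)^[k] (0, 0) = p)
    (hapos : ∀ n, 0 < a n)
    (hΔ0 : Δ 0 = 1)
    (hΔ : ∀ n, Δ (n + 1) = a n + pos (Δ n, 0))
    (h0 : Δ 0 < a 0) (h1 : a 0 < Δ 1) (h1b : Δ 1 < b 1)
    (hn : ∀ n, 1 ≤ n → 2 * b n < a n ∧ Δ (n + 1) < b (n + 1)) :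
    ∀ n : ℕ, pos (Δ (n + 1), 0) = pos (a n, 0) + pos (Δ n, 0) := by

  have bmono : ∀ j k, 1 ≤ j → j ≤ k → b j ≤ b k := by
    intro j k hj hjk
    induction k with
    | zero => omega
    | succ m ih =>
      rcases Nat.lt_or_ge j (m+1) with h | h
      · have hm : 1 ≤ m := by omega
        exact le_trans (ih (by omega)) (le_of_lt (hbmono m hm))
      · have : j = m + 1 := by omega
        simp [this]
  have hstep : ∀ m : ℕ, (∀ k, 1 ≤ k → b k ≠ m) → nextFn b (m, 0) = (m + 1, 0) := by
    intro m hm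
    unfold nextFn
    rw [if_neg, if_neg, if_pos Even.zero]
    · rintro (⟨k, h1, h2, h3, h4⟩ | ⟨k, h1, h2, h3, h4⟩)
      · simp [Nat.odd_iff] at h3
      · simp at h4
    · rintro (⟨k, h1, h2, h3, h4⟩ | ⟨k, h1, h2, h3, h4⟩ | ⟨h1, h2⟩)
      · exact hm k h1 h2.symm
      · simp [Nat.odd_iff] at h3
      · simp [Nat.odd_iff] at h2
  have hadd : ∀ m d : ℕ, (∀ i, i < d → ∀ k, 1 ≤ k → b k ≠ m + i) →
      pos (m + d, 0) = pos (m, 0) + d := by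
    intro m d
    induction d with
    | zero => intro _; simp
    | succ e ih =>
      intro hcond
      have h1 := ih (fun i hi => hcond i (by omega))
      have h2 : (nextFn b)^[pos (m + e, 0)] (0, 0) = (m + e, 0) :=
        (hpos (m + e, 0) (pos (m + e, 0))).1 rfl
      have h3 : (nextFn b)^[pos (m + e, 0) + 1] (0, 0) = (m + e + 1, 0) := by
        rw [Function.iterate_succ_apply', h2]
        exact hstep (m + e) (fun k hk => hcond e (by omega) k hk)
      have h4 : pos (m + e + 1, 0) = pos (m + e, 0) + 1 :=
        (hpos (m + e + 1, 0) (pos (m + e, 0) + 1)).2 h3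
      have : m + (e + 1) = m + e + 1 := by omega
      rw [this, h4, h1]
      omega
  intro n
  have hΔn1 : Δ (n + 1) = a n + pos (Δ n, 0) := hΔ n
  have hub : Δ (n + 1) < b (n + 1) := by
    cases n with
    | zero => exact h1b
    | succ m => exact (hn (m + 1) (by omega)).2
  rw [hΔn1]
  rw [hadd (a n) (pos (Δ n, 0))]
  intro i hi k hk
  rcases Nat.lt_or_ge n k with h | h
  · have hbk : b (n + 1) ≤ b k := bmono (n + 1) k (by omega) h
    omega
  · have hn1 : 1 ≤ n := le_trans hk h
    have h5 := (hn n hn1).1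
    have h6 := bmono k n hk h
    have h7 := hbpos n hn1
    omega
end

section
/- For every j ∈ ℕ and N ∈ ℕ: ‖e_{j+1}‖_N ≤ 2·‖e_j‖_{N+1} and |||e_{j+1}|||_N ≤ 2·|||e_j|||_N. -/
/-- `enum k = Next^k (0, 0)`, the `k`-th element of the ordering of `ℕ × ℕ` defined by `Next`. -/
noncomputable def enum (b : ℕ → ℕ) (k : ℕ) : ℕ × ℕ := (nextFn b)^[k] (0, 0)

/-- The basis vector `e_k = e_{n,m}` where `pos (n, m) = k`, in `s₀,₀^ℕ = ℕ × ℕ →₀ ℝ`. -/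
noncomputable def eVec (b : ℕ → ℕ) (k : ℕ) : ℕ × ℕ →₀ ℝ := Finsupp.single (enum b k) 1

/-- `|(x_{i,j})_i|_N = Σ_i |x_{i,j}| A_{N,i}`, the `N`-th seminorm of the `j`-th column. -/
noncomputable def colNorm (A : ℕ → ℕ → ℝ) (N : ℕ) (x : ℕ × ℕ → ℝ) (j : ℕ) : ℝ :=
  ∑' i : ℕ, |x (i, j)| * A N i

/-- `‖x‖_N = Σ_{j ≤ N} |(x_{i,j})_i|_N`, the seminorms of `s^ℕ`. -/
noncomputable def normK (A : ℕ → ℕ → ℝ) (N : ℕ) (x : ℕ × ℕ → ℝ) : ℝ :=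
  ∑ j ∈ Finset.range (N + 1), colNorm A N x j

/-- `|||x|||_N = Σ_j |(x_{i,j})_i|_N`, the norms of `s₀^ℕ`. -/
noncomputable def norm3 (A : ℕ → ℕ → ℝ) (N : ℕ) (x : ℕ × ℕ → ℝ) : ℝ :=
  ∑' j : ℕ, colNorm A N x j


lemma colNorm_single (A : ℕ → ℕ → ℝ) (hA1 : ∀ N j, 1 ≤ A N j) (N : ℕ) (p : ℕ × ℕ) (j : ℕ) :
    colNorm A N (⇑(Finsupp.single p (1:ℝ))) j = if j = p.2 then A N p.1 else 0 := by
  have h0 : (0:ℝ) ≤ A N p.1 := le_trans zero_le_one (hA1 N p.1)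
  have h : (fun i => |(Finsupp.single p (1:ℝ)) (i,j)| * A N i)
      = fun i => if i = p.1 then (if j = p.2 then A N p.1 else 0) else 0 := by
    funext i
    rw [Finsupp.single_apply]
    by_cases hi : i = p.1 <;> by_cases hj : j = p.2 <;>
      simp [hi, hj, Prod.ext_iff, abs_of_nonneg, h0, eq_comm]
  show (∑' i : ℕ, |(Finsupp.single p (1:ℝ)) (i,j)| * A N i) = _
  rw [h, tsum_ite_eq]

lemma normK_single (A : ℕ → ℕ → ℝ) (hA1 : ∀ N j, 1 ≤ A N j) (N : ℕ) (p : ℕ × ℕ) :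
    normK A N (⇑(Finsupp.single p (1:ℝ))) = if p.2 ≤ N then A N p.1 else 0 := by
  unfold normK
  simp only [colNorm_single A hA1 N p]
  rw [Finset.sum_ite_eq' (Finset.range (N+1)) p.2 (fun _ => A N p.1)]
  simp only [Finset.mem_range, Nat.lt_succ_iff]

lemma norm3_single (A : ℕ → ℕ → ℝ) (hA1 : ∀ N j, 1 ≤ A N j) (N : ℕ) (p : ℕ × ℕ) :
    norm3 A N (⇑(Finsupp.single p (1:ℝ))) = A N p.1 := by
  unfold norm3
  simp only [colNorm_single A hA1 N p]
  exact tsum_ite_eq p.2 (fun _ => A N p.1)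

lemma nextFn_key (A : ℕ → ℕ → ℝ) (b : ℕ → ℕ) (hA1 : ∀ N j, 1 ≤ A N j)
    (hA3m : ∀ N, Monotone fun j => A N j) (hA4 : ∀ N j, A N (j + 1) ≤ 2 * A N j)
    (N : ℕ) (p : ℕ × ℕ) :
    A N (nextFn b p).1 ≤ 2 * A N p.1 ∧ p.2 ≤ (nextFn b p).2 + 1 := by
  have h0 : (0:ℝ) ≤ A N p.1 := le_trans zero_le_one (hA1 N p.1)
  unfold nextFn
  split_ifs with h1 h2 h3
  · exact ⟨show A N p.1 ≤ 2 * A N p.1 by linarith, show p.2 ≤ (p.2 + 1) + 1 by omega⟩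
  · exact ⟨show A N p.1 ≤ 2 * A N p.1 by linarith, show p.2 ≤ (p.2 - 1) + 1 by omega⟩
  · exact ⟨hA4 N p.1, show p.2 ≤ p.2 + 1 by omega⟩
  · refine ⟨show A N (p.1 - 1) ≤ 2 * A N p.1 from ?_, show p.2 ≤ p.2 + 1 by omega⟩
    calc A N (p.1 - 1) ≤ A N p.1 := hA3m N (Nat.sub_le _ _)
      _ ≤ 2 * A N p.1 := by linarith

/-- For every `j` and `N` we have `‖e_{j+1}‖_N ≤ 2 ‖e_j‖_{N+1}` and `|||e_{j+1}|||_N ≤ 2 |||e_j|||_N`. -/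
theorem eVec_estimate
    (A : ℕ → ℕ → ℝ) (b : ℕ → ℕ)
    (hA1 : ∀ N j, 1 ≤ A N j)
    (hA2m : ∀ j, Monotone fun N => A N j)
    (hA2u : ∀ j, ¬ BddAbove (Set.range fun N => A N j))
    (hA3m : ∀ N, Monotone fun j => A N j)
    (hA3u : ∀ N, ¬ BddAbove (Set.range fun j => A N j))
    (hA4 : ∀ N j, A N (j + 1) ≤ 2 * A N j)
    (hA5 : ∀ N, Filter.Tendsto (fun j => A N j / A (N + 1) j) Filter.atTop (nhds 0))
    (hA6 : ∀ N, Filter.Tendsto (fun j => (2 : ℝ) ^ j / A N j) Filter.atTop Filter.atTop)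
    (hbpos : ∀ n, 1 ≤ n → 0 < b n)
    (hbmono : ∀ n, 1 ≤ n → b n < b (n + 1))
    (hbgap : ∀ n, 1 ≤ n → 2 * b n + 1 < b (n + 1))
    :
    ∀ j N : ℕ, normK A N ⇑(eVec b (j + 1)) ≤ 2 * normK A (N + 1) ⇑(eVec b j) ∧
      norm3 A N ⇑(eVec b (j + 1)) ≤ 2 * norm3 A N ⇑(eVec b j) := by
  intro j N
  have h0 : ∀ M i, (0:ℝ) ≤ A M i := fun M i => le_trans zero_le_one (hA1 M i)
  set p := enum b j with hp
  have hsucc : enum b (j + 1) = nextFn b p := Function.iterate_succ_apply' _ _ _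
  set q := nextFn b p with hq
  obtain ⟨hkey1, hkey2⟩ := nextFn_key A b hA1 hA3m hA4 N p
  rw [← hq] at hkey1 hkey2
  have hAq : A N q.1 ≤ 2 * A N p.1 := hkey1
  have hApN : A N p.1 ≤ A (N + 1) p.1 := hA2m p.1 (Nat.le_succ N)
  have e1 : (eVec b (j+1) : ℕ × ℕ → ℝ) = ⇑(Finsupp.single q (1:ℝ)) := by
    rw [eVec, hsucc]
  have e0 : (eVec b j : ℕ × ℕ → ℝ) = ⇑(Finsupp.single p (1:ℝ)) := rfl
  constructor
  · rw [e1, e0, normK_single A hA1 N q, normK_single A hA1 (N+1) p]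
    by_cases hq2 : q.2 ≤ N
    · have hp2 : p.2 ≤ N + 1 := by omega
      rw [if_pos hq2, if_pos hp2]
      linarith
    · rw [if_neg hq2]
      have : (0:ℝ) ≤ if p.2 ≤ N + 1 then A (N+1) p.1 else 0 := by
        split_ifs
        · exact h0 _ _
        · exact le_rfl
      linarith
  · rw [e1, e0, norm3_single A hA1 N q, norm3_single A hA1 N p]
    linarith
end

section
/- For every n ∈ ℕ: τ_n(e_j) = e_j for all j ≤ pos(a_n,0)−1, and τ_n(e_j) = −A_{N_n,a_n}·T^{j−pos(a_n,0)} e_0 for all pos(a_n,0) ≤ j ≤ pos(Δ_{n+1},0)−1. -/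
/-- The projection `τ_n` satisfies `τ_n e_j = e_j` for `j ≤ pos(a_n,0) - 1` and `τ_n e_j = -A_{N_n,a_n} T^{j-pos(a_n,0)} e₀` for `pos(a_n,0) ≤ j ≤ pos(Δ_{n+1},0) - 1`. -/
theorem tau_values
    (A : ℕ → ℕ → ℝ) (b : ℕ → ℕ) (pos : ℕ × ℕ → ℕ)
    (Nn a s : ℕ → ℕ) (D : ℕ → ℝ) (Δ : ℕ → ℕ) (α : ℕ → ℝ)
    (T : (ℕ × ℕ →₀ ℝ) →ₗ[ℝ] (ℕ × ℕ →₀ ℝ))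
    (τ : ℕ → (ℕ × ℕ →₀ ℝ) →ₗ[ℝ] (ℕ × ℕ →₀ ℝ))
    (hA1 : ∀ N j, 1 ≤ A N j)
    (hA2m : ∀ j, Monotone fun N => A N j)
    (hA2u : ∀ j, ¬ BddAbove (Set.range fun N => A N j))
    (hA3m : ∀ N, Monotone fun j => A N j)
    (hA3u : ∀ N, ¬ BddAbove (Set.range fun j => A N j))
    (hA4 : ∀ N j, A N (j + 1) ≤ 2 * A N j)
    (hA5 : ∀ N, Filter.Tendsto (fun j => A N j / A (N + 1) j) Filter.atTop (nhds 0))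
    (hA6 : ∀ N, Filter.Tendsto (fun j => (2 : ℝ) ^ j / A N j) Filter.atTop Filter.atTop)
    (hbpos : ∀ n, 1 ≤ n → 0 < b n)
    (hbmono : ∀ n, 1 ≤ n → b n < b (n + 1))
    (hbgap : ∀ n, 1 ≤ n → 2 * b n + 1 < b (n + 1))
    (hpos : ∀ p k, pos p = k ↔ (nextFn b)^[k] (0, 0) = p)
    (hNle : ∀ n, Nn n ≤ n)
    (hNinf : ∀ N m, ∃ n, m ≤ n ∧ Nn n = N)
    (hD : ∀ n, 1 ≤ D n)
    (hΔ0 : Δ 0 = 1)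
    (hΔ : ∀ n, Δ (n + 1) = a n + pos (Δ n, 0))
    (hord0 : Δ 0 < a 0 ∧ a 0 < Δ 1)
    (hord : ∀ n, 1 ≤ n → Δ n < b n ∧ 2 * b n < s n ∧ s n < a n ∧ a n < Δ (n + 1))
    (hbΔ : ∀ n, 1 ≤ n → 2 * pos (Δ n, 0) ≤ b n)
    (hc2bn : ∀ n k, 1 ≤ n → b n ≤ k →
      (4 : ℝ) ^ pos (Δ n, 0) * A (Nn (n - 1) + 1) k ≤ A (Nn (n - 1) + 2) k / D (n - 1))
    (hc1 : ∀ n, 1 ≤ n →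
      A (Nn n) (a n) * (2 * D (n - 1)) ^ (pos (s n, 0) - pos (Δ n, 0) - 1) ≤
        (2 : ℝ) ^ (pos (a n, 0) - pos (s n, 0) - 1))
    (hc2 : ∀ n, 1 ≤ n → A (Nn (n - 1)) (a (n - 1)) ≤ A (Nn n) (a n))
    (hc4 : ∀ n, 1 ≤ n → D (n - 1) * A (Nn (n - 1)) (b n) ≤ A (Nn n) (a n))
    (hc3 : ∀ n, A (Nn n) (a n) * 4 ^ pos (Δ n, 0) * A 0 0 ≤ A (Nn n + 1) (a n))
    (hc1' : A (Nn 0) (a 0) ≤ (2 : ℝ) ^ (pos (a 0, 0) - pos (Δ 0, 0) - 1))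
    (hα0 : ∀ j, pos (Δ 0, 0) ≤ j → j < pos (a 0, 0) →
      α j = (2 : ℝ) ^ (j - pos (Δ 0, 0)) / A (Nn 0) (a 0))
    (hα1 : ∀ n j, 1 ≤ n → pos (Δ n, 0) ≤ j → j < pos (s n, 0) →
      α j = (1 / A (Nn n) (a n)) * ((2 * D (n - 1)) ^ (j - pos (Δ n, 0)))⁻¹)
    (hα2 : ∀ n j, 1 ≤ n → pos (s n, 0) ≤ j → j < pos (a n, 0) →
      α j = α (pos (s n, 0) - 1) * 2 ^ (j - pos (s n, 0)))
    (hT0 : T (eVec b 0) = α 1 • eVec b 1)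
    (hTa : ∀ n j, pos (Δ n, 0) ≤ j → j + 1 < pos (a n, 0) →
      T (eVec b j) = (α (j + 1) / α j) • eVec b (j + 1))
    (hTb : ∀ n : ℕ, T (eVec b (pos (a n, 0) - 1)) =
      (α (pos (a n, 0) - 1))⁻¹ • ((A (Nn n) (a n))⁻¹ • eVec b (pos (a n, 0)) + eVec b 0))
    (hTc : ∀ n j, pos (a n, 0) ≤ j → j + 1 < pos (Δ (n + 1), 0) →
      T (eVec b j) = eVec b (j + 1))
    (hTd : ∀ n : ℕ, T (eVec b (pos (Δ (n + 1), 0) - 1)) =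
      (A (Nn n) (a n) * α (pos (Δ (n + 1), 0))) • eVec b (pos (Δ (n + 1), 0)) -
        (A (Nn n) (a n) * α (pos (Δ n, 0))) • eVec b (pos (Δ n, 0)))
    (hτ : ∀ (n : ℕ) (y : ℕ → ℝ),
      τ n (∑ j ∈ Finset.range (pos (Δ (n + 1), 0)), y j • (T ^ j) (eVec b 0)) =
        ∑ j ∈ Finset.range (pos (a n, 0)), y j • (T ^ j) (eVec b 0))
    :
    ∀ n : ℕ,
      (∀ j, j < pos (a n, 0) → τ n (eVec b j) = eVec b j) ∧
      (∀ j, pos (a n, 0) ≤ j → j < pos (Δ (n + 1), 0) →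
        τ n (eVec b j) = -(A (Nn n) (a n)) • (T ^ (j - pos (a n, 0))) (eVec b 0)) := by

  classical
  -- basic positivity of A and D
  have hApos : ∀ N j, (0:ℝ) < A N j := fun N j => lt_of_lt_of_le one_pos (hA1 N j)
  have hDpos : ∀ n, (0:ℝ) < D n := fun n => lt_of_lt_of_le one_pos (hD n)
  -- the orbit reaches every point at time pos p
  have horbit : ∀ p : ℕ × ℕ, (nextFn b)^[pos p] (0, 0) = p :=
    fun p => (hpos p (pos p)).mp rfl
  -- first coordinate grows at most by one each step
  have F1 : ∀ k : ℕ, ((nextFn b)^[k] (0, 0)).1 ≤ k := by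
    intro k
    induction k with
    | zero => simp
    | succ k ih =>
      rw [Function.iterate_succ_apply']
      have hstep : ∀ p : ℕ × ℕ, (nextFn b p).1 ≤ p.1 + 1 := by
        intro p
        unfold nextFn
        split_ifs <;> simp <;> omega
      exact le_trans (hstep _) (by omega)
  have F2 : ∀ m : ℕ, m ≤ pos (m, 0) := by
    intro m
    have h := F1 (pos (m, 0))
    rw [horbit (m, 0)] at h
    exact h
  -- b is monotone on [1, ∞)
  have bmono : ∀ k l, 1 ≤ k → k ≤ l → b k ≤ b l := by
    intro k l hk hkl
    induction l, hkl using Nat.le_induction with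
    | base => exact le_rfl
    | succ l hl ih => exact le_trans ih (le_of_lt (hbmono l (le_trans hk hl)))
  -- stepping along the 0-th column
  have hstep0 : ∀ m : ℕ, (∀ k, 1 ≤ k → m ≠ b k) → nextFn b (m, 0) = (m + 1, 0) := by
    intro m hm
    unfold nextFn
    have h1 : ¬ ((∃ n : ℕ, 1 ≤ n ∧ (m, 0).1 = b n ∧ Even (m, 0).2 ∧ (m, 0).2 < 2 * n) ∨
       (∃ n : ℕ, 1 ≤ n ∧ (m, 0).1 = 2 * b n + 1 ∧ Odd (m, 0).2 ∧ 0 < (m, 0).2 ∧ (m, 0).2 ≤ 2 * n) ∨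
       ((m, 0).1 = 0 ∧ Odd (m, 0).2)) := by
      simp only [Nat.odd_iff]
      push_neg
      refine ⟨?_, ?_, ?_⟩
      · intro n hn hb _ ; exact absurd hb (hm n hn)
      · intro n _ _ h; simp at h
      · intro _; simp
    rw [if_neg h1]
    have h2 : ¬ ((∃ n : ℕ, 1 ≤ n ∧ (m, 0).1 = b n + 1 ∧ Odd (m, 0).2 ∧ (m, 0).2 < 2 * n) ∨
        (∃ n : ℕ, 1 ≤ n ∧ (m, 0).1 = 2 * b n ∧ Even (m, 0).2 ∧ 0 < (m, 0).2 ∧ (m, 0).2 ≤ 2 * n)) := by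
      simp only [Nat.odd_iff]
      push_neg
      constructor
      · intro n _ _ h; simp at h
      · intro n _ _ _ h; simp at h
    rw [if_neg h2, if_pos (by simp)]
  have ha2 : ∀ n, 2 ≤ a n := by
    intro n
    rcases Nat.eq_zero_or_pos n with rfl | hn
    · omega
    · have h1 := hord n hn
      have h2 := hbpos n hn
      omega
  have hΔ1 : ∀ n, 1 ≤ Δ n := by
    intro n
    cases n with
    | zero => omega
    | succ m => have := hΔ m; have := ha2 m; omega
  have hP1 : ∀ n, 1 ≤ pos (Δ n, 0) := by
    intro n
    by_contra h
    have h0 : pos (Δ n, 0) = 0 := by omega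
    have := horbit (Δ n, 0)
    rw [h0] at this
    rw [Function.iterate_zero, id_eq, Prod.ext_iff] at this
    have := hΔ1 n
    rename_i h'
    simp at h'
    omega
  -- pos (1, 0) = 1
  have pos10 : pos (1, 0) = 1 := by
    apply (hpos (1, 0) 1).mpr
    rw [Function.iterate_one]
    apply hstep0
    intro k hk
    have := hbpos k hk
    omega
  -- the key combinatorial identity : pos (Δ (n+1), 0) = pos (a n, 0) + pos (Δ n, 0)
  have hPsucc : ∀ n, pos (Δ (n + 1), 0) = pos (a n, 0) + pos (Δ n, 0) := by
    intro n
    have hnb : ∀ m, a n ≤ m → m < a n + pos (Δ n, 0) → ∀ k, 1 ≤ k → m ≠ b k := by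
      intro m hm1 hm2 k hk
      rcases le_or_gt k n with hkn | hkn
      · have h1 : 1 ≤ n := le_trans hk hkn
        have h2 : b k ≤ b n := bmono k n hk hkn
        have h3 := hord n h1
        omega
      · have h2 : b (n + 1) ≤ b k := bmono (n + 1) k (by omega) (by omega)
        have h3 := (hord (n + 1) (by omega)).1
        have h4 := hΔ n
        omega
    have hiter : ∀ t, t ≤ pos (Δ n, 0) → (nextFn b)^[t] (a n, 0) = (a n + t, 0) := by
      intro t
      induction t with
      | zero => simp
      | succ t ih =>
        intro ht
        rw [Function.iterate_succ_apply', ih (by omega),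
          hstep0 (a n + t) (hnb (a n + t) (by omega) (by omega))]
        simp [Nat.add_assoc]
    have hfull : (nextFn b)^[pos (Δ n, 0) + pos (a n, 0)] (0, 0) = (Δ (n + 1), 0) := by
      rw [Function.iterate_add_apply, horbit (a n, 0), hiter _ le_rfl, hΔ n]
    have := (hpos (Δ (n + 1), 0) _).mpr hfull
    omega
  have hQa : ∀ n, a n ≤ pos (a n, 0) := fun n => F2 (a n)
  have hP0 : pos (Δ 0, 0) = 1 := by rw [hΔ0]; exact pos10
  have hPQ : ∀ n, pos (Δ n, 0) < pos (a n, 0) := by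
    intro n
    rcases Nat.eq_zero_or_pos n with rfl | hn
    · have := hQa 0; have := ha2 0; omega
    · have h1 := hbΔ n hn
      have h2 := hord n hn
      have h3 := hQa n
      omega
  have hPsn : ∀ n, 1 ≤ n → pos (Δ n, 0) < pos (s n, 0) := by
    intro n hn
    have h1 := hbΔ n hn
    have h2 := hord n hn
    have h3 := F2 (s n)
    omega
  -- positivity of α on the relevant range
  have hαpos : ∀ n j, pos (Δ n, 0) ≤ j → j < pos (a n, 0) → 0 < α j := by
    intro n j h1 h2
    rcases Nat.eq_zero_or_pos n with rfl | hn
    · rw [hα0 j h1 h2]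
      have := hApos (Nn 0) (a 0)
      positivity
    · by_cases hs : j < pos (s n, 0)
      · rw [hα1 n j hn h1 hs]
        have := hApos (Nn n) (a n)
        have := hDpos (n - 1)
        positivity
      · push_neg at hs
        rw [hα2 n j hn hs h2]
        have h3 : pos (Δ n, 0) ≤ pos (s n, 0) - 1 := by have := hPsn n hn; omega
        have h4 : pos (s n, 0) - 1 < pos (s n, 0) := by have := hPsn n hn; omega
        rw [hα1 n _ hn h3 h4]
        have := hApos (Nn n) (a n)
        have := hDpos (n - 1)
        positivity
  -- iterating T through a T-pass block
  have powsucc : ∀ (k : ℕ) (v : ℕ × ℕ →₀ ℝ), (T ^ (k + 1)) v = T ((T ^ k) v) := by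
    intro k v
    rw [pow_succ', Module.End.mul_apply]
  have stepA : ∀ n, (T ^ pos (Δ n, 0)) (eVec b 0) = α (pos (Δ n, 0)) • eVec b (pos (Δ n, 0)) →
      ∀ j, pos (Δ n, 0) ≤ j → j < pos (a n, 0) → (T ^ j) (eVec b 0) = α j • eVec b j := by
    intro n hbase j hj
    induction j, hj using Nat.le_induction with
    | base => intro _; exact hbase
    | succ j hj ih =>
      intro hlt
      have hjlt : j < pos (a n, 0) := by omega
      have hαj : α j ≠ 0 := (hαpos n j hj hjlt).ne'
      rw [powsucc, ih hjlt, map_smul, hTa n j hj hlt, smul_smul,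
        mul_div_cancel₀ _ hαj]
  have stepB : ∀ n, (∀ j, pos (Δ n, 0) ≤ j → j < pos (a n, 0) → (T ^ j) (eVec b 0) = α j • eVec b j) →
      ∀ j, pos (a n, 0) ≤ j → j < pos (Δ (n + 1), 0) →
      (T ^ j) (eVec b 0) =
        (A (Nn n) (a n))⁻¹ • eVec b j + (T ^ (j - pos (a n, 0))) (eVec b 0) := by
    intro n ha j hj
    induction j, hj using Nat.le_induction with
    | base =>
      intro _
      have h1 : pos (Δ n, 0) ≤ pos (a n, 0) - 1 := by have := hPQ n; omega
      have h2 : pos (a n, 0) - 1 < pos (a n, 0) := by have := hPQ n; have := hP1 n; omega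
      have hprev := ha _ h1 h2
      have hαne : α (pos (a n, 0) - 1) ≠ 0 := (hαpos n _ h1 h2).ne'
      have hQ1 : pos (a n, 0) - 1 + 1 = pos (a n, 0) := by have := hPQ n; have := hP1 n; omega
      have hT' : (T ^ pos (a n, 0)) (eVec b 0) = T ((T ^ (pos (a n, 0) - 1)) (eVec b 0)) := by
        conv_lhs => rw [← hQ1]
        exact powsucc _ _
      rw [hT', hprev, map_smul, hTb n, smul_smul, mul_inv_cancel₀ hαne, one_smul,
        Nat.sub_self, pow_zero]
      simp
    | succ j hj ih =>
      intro hlt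
      have hTc' := hTc n j hj hlt
      have hk : j + 1 - pos (a n, 0) = (j - pos (a n, 0)) + 1 := by omega
      rw [powsucc, ih (by omega), map_add, map_smul, hTc', hk, powsucc]
  -- T^{P n} e0 = α_{P n} e_{P n}
  have Psi : ∀ n, (T ^ pos (Δ n, 0)) (eVec b 0) = α (pos (Δ n, 0)) • eVec b (pos (Δ n, 0)) := by
    intro n
    induction n with
    | zero => rw [hP0, pow_one]; exact hT0
    | succ n ih =>
      have ha := stepA n ih
      have hb := stepB n ha
      have e1 := hPsucc n
      have e2 := hP1 n
      have e3 := hP1 (n + 1)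
      have e4 := hPQ n
      have hprev := hb (pos (Δ (n + 1), 0) - 1) (by omega) (by omega)
      have hQn1 : pos (Δ (n + 1), 0) - 1 + 1 = pos (Δ (n + 1), 0) := by omega
      have hAne : A (Nn n) (a n) ≠ 0 := (hApos _ _).ne'
      have hT' : (T ^ pos (Δ (n + 1), 0)) (eVec b 0) =
          T ((T ^ (pos (Δ (n + 1), 0) - 1)) (eVec b 0)) := by
        conv_lhs => rw [← hQn1]
        exact powsucc _ _
      have hlast : T ((T ^ (pos (Δ (n + 1), 0) - 1 - pos (a n, 0))) (eVec b 0)) =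
          (T ^ pos (Δ n, 0)) (eVec b 0) := by
        rw [← powsucc]
        have hexp : pos (Δ (n + 1), 0) - 1 - pos (a n, 0) + 1 = pos (Δ n, 0) := by omega
        rw [hexp]
      rw [hT', hprev, map_add, map_smul, hTd n, hlast, ih, smul_sub, smul_smul, smul_smul,
        inv_mul_cancel_left₀ hAne, inv_mul_cancel_left₀ hAne]
      abel
  have repA : ∀ n j, pos (Δ n, 0) ≤ j → j < pos (a n, 0) →
      eVec b j = (α j)⁻¹ • (T ^ j) (eVec b 0) := by
    intro n j h1 h2
    have hαj : α j ≠ 0 := (hαpos n j h1 h2).ne'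
    rw [stepA n (Psi n) j h1 h2, smul_smul, inv_mul_cancel₀ hαj, one_smul]
  have repB : ∀ n j, pos (a n, 0) ≤ j → j < pos (Δ (n + 1), 0) →
      eVec b j = A (Nn n) (a n) • (T ^ j) (eVec b 0) -
        A (Nn n) (a n) • (T ^ (j - pos (a n, 0))) (eVec b 0) := by
    intro n j h1 h2
    have hAne : A (Nn n) (a n) ≠ 0 := (hApos _ _).ne'
    rw [stepB n (stepA n (Psi n)) j h1 h2, smul_add, smul_smul, mul_inv_cancel₀ hAne, one_smul]
    abel
  -- τ on powers of T applied to e0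
  have tauT : ∀ n k, k < pos (Δ (n + 1), 0) → τ n ((T ^ k) (eVec b 0)) =
      if k < pos (a n, 0) then (T ^ k) (eVec b 0) else 0 := by
    intro n k hk
    have h := hτ n (fun i => if i = k then (1 : ℝ) else 0)
    simp only [ite_smul, one_smul, zero_smul] at h
    rw [Finset.sum_ite_eq' (Finset.range (pos (Δ (n + 1), 0))) k (fun j => (T ^ j) (eVec b 0)),
      Finset.sum_ite_eq' (Finset.range (pos (a n, 0))) k (fun j => (T ^ j) (eVec b 0)),
      if_pos (Finset.mem_range.mpr hk)] at h
    rw [h]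
    by_cases hc : k < pos (a n, 0)
    · rw [if_pos (Finset.mem_range.mpr hc), if_pos hc]
    · rw [if_neg (fun hm => hc (Finset.mem_range.mp hm)), if_neg hc]
  -- P is strictly increasing with P m ≥ m + 1
  have hPge : ∀ m, m + 1 ≤ pos (Δ m, 0) := by
    intro m
    induction m with
    | zero => omega
    | succ m ih =>
      have := hPsucc m
      have := hQa m
      have := ha2 m
      omega
  -- block decomposition
  have block : ∀ j, 1 ≤ j → ∃ m, pos (Δ m, 0) ≤ j ∧ j < pos (Δ (m + 1), 0) := by
    intro j hj
    have hex : ∃ m, j < pos (Δ (m + 1), 0) := ⟨j, by have := hPge (j + 1); omega⟩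
    refine ⟨Nat.find hex, ?_, Nat.find_spec hex⟩
    rcases Nat.eq_zero_or_pos (Nat.find hex) with h0 | h0
    · rw [h0, hP0]; exact hj
    · have hmin := Nat.find_min hex (m := Nat.find hex - 1) (by omega)
      push_neg at hmin
      have : Nat.find hex - 1 + 1 = Nat.find hex := by omega
      rwa [this] at hmin
  -- final assembly
  intro n
  have e1 := hPsucc n
  have e2 := hP1 n
  have hQ1 : 1 ≤ pos (a n, 0) := by have := hQa n; have := ha2 n; omega
  constructor
  · intro j hj
    have hjP : j < pos (Δ (n + 1), 0) := by omega
    rcases Nat.eq_zero_or_pos j with rfl | hj1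
    · have h0 : eVec b 0 = (T ^ 0) (eVec b 0) := by simp
      rw [h0, tauT n 0 (by omega), if_pos (by omega)]
    · obtain ⟨m, hm1, hm2⟩ := block j hj1
      by_cases hc : j < pos (a m, 0)
      · have hrep := repA m j hm1 hc
        rw [hrep, map_smul, tauT n j hjP, if_pos hj]
      · push_neg at hc
        have hrep := repB m j hc hm2
        have hk2 : j - pos (a m, 0) ≤ j := by omega
        rw [hrep, map_sub, map_smul, map_smul, tauT n j hjP,
          tauT n (j - pos (a m, 0)) (by omega), if_pos hj, if_pos (by omega)]
  · intro j hj1 hj2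
    have hrep := repB n j hj1 hj2
    have hk2 : j - pos (a n, 0) < pos (Δ n, 0) := by omega
    have hPQn := hPQ n
    rw [hrep, map_sub, map_smul, map_smul, tauT n j hj2,
      tauT n (j - pos (a n, 0)) (by omega), if_neg (by omega), if_pos (by omega),
      smul_zero, zero_sub, ← neg_smul]
end

section
/- For every n ∈ ℕ and every y ∈ K_n there is a polynomial P(t) = Σ_{i=1}^{pos(Δ_{n+1},0)} c_i·t^i with Σ_{i=1}^{pos(Δ_{n+1},0)} |c_i| ≤ D_n for which |||P(T)y − e_0|||_{N_n} ≤ 3. -/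
/-- For every `n` and `y ∈ K_n` there is a polynomial `P(t) = Σ_{i=1}^{pos(Δ_{n+1},0)} c_i tⁱ` with `Σ |c_i| ≤ D_n` and `|||P(T) y - e₀|||_{N_n} ≤ 3`. -/
theorem heads_estimate
    (A : ℕ → ℕ → ℝ) (b : ℕ → ℕ) (pos : ℕ × ℕ → ℕ)
    (Nn a s : ℕ → ℕ) (D : ℕ → ℝ) (Δ : ℕ → ℕ) (α : ℕ → ℝ)
    (T : (ℕ × ℕ →₀ ℝ) →ₗ[ℝ] (ℕ × ℕ →₀ ℝ))
    (τ : ℕ → (ℕ × ℕ →₀ ℝ) →ₗ[ℝ] (ℕ × ℕ →₀ ℝ))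
    (hA1 : ∀ N j, 1 ≤ A N j)
    (hA2m : ∀ j, Monotone fun N => A N j)
    (hA2u : ∀ j, ¬ BddAbove (Set.range fun N => A N j))
    (hA3m : ∀ N, Monotone fun j => A N j)
    (hA3u : ∀ N, ¬ BddAbove (Set.range fun j => A N j))
    (hA4 : ∀ N j, A N (j + 1) ≤ 2 * A N j)
    (hA5 : ∀ N, Filter.Tendsto (fun j => A N j / A (N + 1) j) Filter.atTop (nhds 0))
    (hA6 : ∀ N, Filter.Tendsto (fun j => (2 : ℝ) ^ j / A N j) Filter.atTop Filter.atTop)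
    (hbpos : ∀ n, 1 ≤ n → 0 < b n)
    (hbmono : ∀ n, 1 ≤ n → b n < b (n + 1))
    (hbgap : ∀ n, 1 ≤ n → 2 * b n + 1 < b (n + 1))
    (hpos : ∀ p k, pos p = k ↔ (nextFn b)^[k] (0, 0) = p)
    (hNle : ∀ n, Nn n ≤ n)
    (hNinf : ∀ N m, ∃ n, m ≤ n ∧ Nn n = N)
    (hD : ∀ n, 1 ≤ D n)
    (hΔ0 : Δ 0 = 1)
    (hΔ : ∀ n, Δ (n + 1) = a n + pos (Δ n, 0))
    (hord0 : Δ 0 < a 0 ∧ a 0 < Δ 1)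
    (hord : ∀ n, 1 ≤ n → Δ n < b n ∧ 2 * b n < s n ∧ s n < a n ∧ a n < Δ (n + 1))
    (hbΔ : ∀ n, 1 ≤ n → 2 * pos (Δ n, 0) ≤ b n)
    (hc2bn : ∀ n k, 1 ≤ n → b n ≤ k →
      (4 : ℝ) ^ pos (Δ n, 0) * A (Nn (n - 1) + 1) k ≤ A (Nn (n - 1) + 2) k / D (n - 1))
    (hc1 : ∀ n, 1 ≤ n →
      A (Nn n) (a n) * (2 * D (n - 1)) ^ (pos (s n, 0) - pos (Δ n, 0) - 1) ≤
        (2 : ℝ) ^ (pos (a n, 0) - pos (s n, 0) - 1))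
    (hc2 : ∀ n, 1 ≤ n → A (Nn (n - 1)) (a (n - 1)) ≤ A (Nn n) (a n))
    (hc4 : ∀ n, 1 ≤ n → D (n - 1) * A (Nn (n - 1)) (b n) ≤ A (Nn n) (a n))
    (hc3 : ∀ n, A (Nn n) (a n) * 4 ^ pos (Δ n, 0) * A 0 0 ≤ A (Nn n + 1) (a n))
    (hc1' : A (Nn 0) (a 0) ≤ (2 : ℝ) ^ (pos (a 0, 0) - pos (Δ 0, 0) - 1))
    (hα0 : ∀ j, pos (Δ 0, 0) ≤ j → j < pos (a 0, 0) →
      α j = (2 : ℝ) ^ (j - pos (Δ 0, 0)) / A (Nn 0) (a 0))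
    (hα1 : ∀ n j, 1 ≤ n → pos (Δ n, 0) ≤ j → j < pos (s n, 0) →
      α j = (1 / A (Nn n) (a n)) * ((2 * D (n - 1)) ^ (j - pos (Δ n, 0)))⁻¹)
    (hα2 : ∀ n j, 1 ≤ n → pos (s n, 0) ≤ j → j < pos (a n, 0) →
      α j = α (pos (s n, 0) - 1) * 2 ^ (j - pos (s n, 0)))
    (hT0 : T (eVec b 0) = α 1 • eVec b 1)
    (hTa : ∀ n j, pos (Δ n, 0) ≤ j → j + 1 < pos (a n, 0) →
      T (eVec b j) = (α (j + 1) / α j) • eVec b (j + 1))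
    (hTb : ∀ n : ℕ, T (eVec b (pos (a n, 0) - 1)) =
      (α (pos (a n, 0) - 1))⁻¹ • ((A (Nn n) (a n))⁻¹ • eVec b (pos (a n, 0)) + eVec b 0))
    (hTc : ∀ n j, pos (a n, 0) ≤ j → j + 1 < pos (Δ (n + 1), 0) →
      T (eVec b j) = eVec b (j + 1))
    (hTd : ∀ n : ℕ, T (eVec b (pos (Δ (n + 1), 0) - 1)) =
      (A (Nn n) (a n) * α (pos (Δ (n + 1), 0))) • eVec b (pos (Δ (n + 1), 0)) -
        (A (Nn n) (a n) * α (pos (Δ n, 0))) • eVec b (pos (Δ n, 0)))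
    (hτ : ∀ (n : ℕ) (y : ℕ → ℝ),
      τ n (∑ j ∈ Finset.range (pos (Δ (n + 1), 0)), y j • (T ^ j) (eVec b 0)) =
        ∑ j ∈ Finset.range (pos (a n, 0)), y j • (T ^ j) (eVec b 0))
    (hDn : ∀ n : ℕ, ∀ y : ℕ × ℕ →₀ ℝ,
      y ∈ Submodule.span ℝ (eVec b '' {j | j < pos (Δ (n + 1), 0)}) →
      norm3 A 0 ⇑y ≤ 1 → 1 / 2 ≤ norm3 A 0 ⇑(τ n y) →
      ∃ c : ℕ → ℝ, (∑ i ∈ Finset.Icc 1 (pos (Δ (n + 1), 0)), |c i|) ≤ D n ∧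
        norm3 A (Nn n)
            ⇑((∑ i ∈ Finset.Icc 1 (pos (Δ (n + 1), 0)), c i • (T ^ i) y) - eVec b 0) ≤
          2 / A (Nn n) (a n) * norm3 A (Nn n) ⇑(eVec b (pos (a n, 0))) +
            D n * sSup ((fun j => norm3 A (Nn n) ⇑((T ^ j) (eVec b 0))) ''
              Set.Icc (pos (Δ (n + 1), 0)) (2 * (pos (Δ (n + 1), 0) - 1))))
    :
    ∀ n : ℕ, ∀ y : ℕ × ℕ →₀ ℝ,
      y ∈ Submodule.span ℝ (eVec b '' {j | j < pos (Δ (n + 1), 0)}) →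
      norm3 A 0 ⇑y ≤ 1 → 1 / 2 ≤ norm3 A 0 ⇑(τ n y) →
      ∃ c : ℕ → ℝ, (∑ i ∈ Finset.Icc 1 (pos (Δ (n + 1), 0)), |c i|) ≤ D n ∧
        norm3 A (Nn n)
          ⇑((∑ i ∈ Finset.Icc 1 (pos (Δ (n + 1), 0)), c i • (T ^ i) y) - eVec b 0) ≤ 3 := by
  
  intro n y hy h1 h2
  obtain ⟨c, hc, hbound⟩ := hDn n y hy h1 h2
  refine ⟨c, hc, hbound.trans ?_⟩
  clear hbound hc
  -- basic positivity
  have hApos : ∀ N j, (0:ℝ) < A N j := fun N j => lt_of_lt_of_le one_pos (hA1 N j)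
  have hDpos : ∀ k, (0:ℝ) < D k := fun k => lt_of_lt_of_le one_pos (hD k)
  -- enum/pos basics
  have henum_succ : ∀ k, enum b (k+1) = nextFn b (enum b k) := by
    intro k; simp [enum, Function.iterate_succ_apply']
  have henum_pos : ∀ p : ℕ × ℕ, enum b (pos p) = p := fun p => (hpos p (pos p)).mp rfl
  have hpos_eq : ∀ (p : ℕ × ℕ) k, enum b k = p → pos p = k := fun p k h => (hpos p k).mpr h
  have hstep : ∀ i, (∀ m, 1 ≤ m → i ≠ b m) → nextFn b (i, 0) = (i+1, 0) := by
    intro i hi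
    unfold nextFn
    split_ifs with h1 h2 h3
    · exfalso
      rcases h1 with ⟨m, hm, he, _, _⟩ | ⟨m, hm, he, hodd, _, _⟩ | ⟨he, hodd⟩
      · exact hi m hm he
      · simp [Nat.odd_iff] at hodd
      · simp [Nat.odd_iff] at hodd
    · exfalso
      rcases h2 with ⟨m, hm, he, hodd, _⟩ | ⟨m, hm, he, _, hlt, _⟩
      · simp [Nat.odd_iff] at hodd
      · simp at hlt
    · rfl
    · exact absurd Even.zero h3
  have henum_fst : ∀ k, (enum b k).1 ≤ k := by
    intro k; induction k with
    | zero => simp [enum]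
    | succ k ih =>
      rw [henum_succ]
      have : (nextFn b (enum b k)).1 ≤ (enum b k).1 + 1 := by
        unfold nextFn; split_ifs <;> dsimp <;> omega
      omega
  have hPge : ∀ x : ℕ, x ≤ pos (x, 0) := by
    intro x
    have h := henum_fst (pos (x, 0))
    rw [henum_pos (x, 0)] at h
    exact h
  have hL1 : ∀ x t : ℕ, (∀ i, x ≤ i → i < x + t → ∀ m, 1 ≤ m → i ≠ b m) →
      pos (x + t, 0) = pos (x, 0) + t := by
    intro x t
    have key : ∀ t : ℕ, (∀ i, x ≤ i → i < x + t → ∀ m, 1 ≤ m → i ≠ b m) →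
        enum b (pos (x, 0) + t) = (x + t, 0) := by
      intro t
      induction t with
      | zero => intro _; simpa using henum_pos (x, 0)
      | succ t ih =>
        intro hav
        have e1 := ih (fun i hi1 hi2 m hm => hav i hi1 (by omega) m hm)
        have e2 : pos (x,0) + (t+1) = (pos (x,0) + t) + 1 := rfl
        rw [e2, henum_succ, e1, hstep (x+t) (fun m hm => hav (x+t) (by omega) (by omega) m hm)]
        rfl
    intro hav
    exact hpos_eq _ _ (key t hav)
  have hbmono' : ∀ m m', 1 ≤ m → m ≤ m' → b m ≤ b m' := by
    intro m m' hm h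
    induction m' with
    | zero => omega
    | succ k ih =>
      rcases Nat.eq_or_lt_of_le h with h' | h'
      · rw [h']
      · have hmk : m ≤ k := by omega
        exact le_trans (ih hmk) (le_of_lt (hbmono k (by omega)))
  -- ordering facts
  have ha1 : ∀ k, 1 ≤ a k := by
    intro k
    cases k with
    | zero => have := hord0.1; omega
    | succ k =>
      have h := hord (k+1) (by omega)
      have := hbpos (k+1) (by omega)
      omega
  have hΔ1 : ∀ k, 1 ≤ Δ k := by
    intro k
    cases k with
    | zero => omega
    | succ k => have := ha1 k; rw [hΔ k]; omega
  have hP1 : ∀ k, 1 ≤ pos (Δ k, 0) := fun k => le_trans (hΔ1 k) (hPge (Δ k))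
  have hP0 : pos (Δ 0, 0) = 1 := by
    have h00 : pos ((0:ℕ), (0:ℕ)) = 0 := hpos_eq _ _ rfl
    have h := hL1 0 1 (fun i hi1 hi2 m hm => by have := hbpos m hm; omega)
    rw [h00] at h
    rw [hΔ0]
    simpa using h
  have hPlt : ∀ k, pos (Δ k, 0) < pos (a k, 0) := by
    intro k
    cases k with
    | zero =>
      rw [hP0]
      have h1 := hPge (a 0)
      have h2 := hord0.1
      omega
    | succ k =>
      have h1 := hbΔ (k+1) (by omega)
      have h2 := hord (k+1) (by omega)
      have h3 := hPge (a (k+1))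
      omega
  have hPs : ∀ k, 1 ≤ k → pos (Δ k, 0) < pos (s k, 0) := by
    intro k hk
    have h1 := hbΔ k hk
    have h2 := hord k hk
    have h3 := hPge (s k)
    omega
  have hF1 : ∀ k, pos (Δ (k+1), 0) = pos (a k, 0) + pos (Δ k, 0) := by
    intro k
    rw [hΔ k]
    apply hL1 (a k) (pos (Δ k, 0))
    intro i hi1 hi2 m hm hbe
    rcases Nat.lt_or_ge m (k+1) with hmk | hmk
    · have hk1 : 1 ≤ k := by omega
      have hb1 : b m ≤ b k := hbmono' m k hm (by omega)
      have h2 := hord k hk1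
      omega
    · have hb1 : b (k+1) ≤ b m := hbmono' (k+1) m (by omega) hmk
      have h2 := (hord (k+1) (by omega)).1
      have h3 := hΔ k
      omega
  -- positivity of α in blocks
  have hαpos : ∀ k j, pos (Δ k, 0) ≤ j → j < pos (a k, 0) → 0 < α j := by
    intro k j hj1 hj2
    cases k with
    | zero =>
      rw [hα0 j hj1 hj2]
      exact div_pos (by positivity) (hApos _ _)
    | succ k =>
      rcases Nat.lt_or_ge j (pos (s (k+1), 0)) with hlt | hge
      · rw [hα1 (k+1) j (by omega) hj1 hlt]
        exact mul_pos (div_pos one_pos (hApos _ _))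
          (inv_pos.mpr (pow_pos (mul_pos two_pos (hDpos _)) _))
      · rw [hα2 (k+1) j (by omega) hge hj2]
        have hps := hPs (k+1) (by omega)
        have h0 : 0 < α (pos (s (k+1), 0) - 1) := by
          rw [hα1 (k+1) _ (by omega) (by omega) (by omega)]
          exact mul_pos (div_pos one_pos (hApos _ _))
            (inv_pos.mpr (pow_pos (mul_pos two_pos (hDpos _)) _))
        exact mul_pos h0 (by positivity)
  -- propagate within a block
  have key : ∀ k, (T ^ (pos (Δ k, 0))) (eVec b 0)
        = α (pos (Δ k, 0)) • eVec b (pos (Δ k, 0)) →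
      ∀ j, pos (Δ k, 0) ≤ j → j < pos (a k, 0) →
        (T ^ j) (eVec b 0) = α j • eVec b j := by
    intro k hbase j
    induction j with
    | zero => intro h _; exact absurd h (by have := hP1 k; omega)
    | succ j ih =>
      intro hj1 hj2
      rcases Nat.eq_or_lt_of_le hj1 with he | hlt
      · rw [← he]; exact hbase
      · have hj1' : pos (Δ k, 0) ≤ j := by omega
        have hj2' : j < pos (a k, 0) := by omega
        have ihj := ih hj1' hj2'
        have hne : α j ≠ 0 := ne_of_gt (hαpos k j hj1' hj2')
        rw [pow_succ', Module.End.mul_apply, ihj, map_smul, hTa k j hj1' hj2, smul_smul]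
        congr 1
        field_simp
  -- main computation: T^j e0 = α j • e_j in the heads region
  have hA_main : ∀ k j, pos (Δ k, 0) ≤ j → j < pos (a k, 0) →
      (T ^ j) (eVec b 0) = α j • eVec b j := by
    intro k
    induction k with
    | zero =>
      apply key
      rw [hP0, pow_one, hT0]
    | succ k ihk =>
      -- the tail region of block k
      have hB : ∀ j, pos (a k, 0) ≤ j → j < pos (Δ (k+1), 0) →
          (T ^ j) (eVec b 0)
            = (A (Nn k) (a k))⁻¹ • eVec b j + (T ^ (j - pos (a k, 0))) (eVec b 0) := by
        intro j
        induction j with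
        | zero => intro h _; exact absurd h (by have := hPge (a k); have := ha1 k; omega)
        | succ j ih =>
          intro hj1 hj2
          rcases Nat.eq_or_lt_of_le hj1 with he | hlt
          · -- pos (a k, 0) = j + 1
            have hPk := hPlt k
            have hfj := ihk j (by omega) (by omega)
            have hj' : pos (a k, 0) - 1 = j := by omega
            have htb := hTb k
            rw [hj'] at htb
            have hne : α j ≠ 0 := ne_of_gt (hαpos k j (by omega) (by omega))
            have h0 : j + 1 - pos (a k, 0) = 0 := by omega
            rw [pow_succ', Module.End.mul_apply, hfj, map_smul, htb, smul_smul,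
              mul_inv_cancel₀ hne, one_smul, h0, pow_zero, Module.End.one_apply, ← he]
          · have ihj := ih (by omega) (by omega)
            have hexp : j + 1 - pos (a k, 0) = (j - pos (a k, 0)) + 1 := by omega
            rw [pow_succ', Module.End.mul_apply, ihj, map_add, map_smul,
              hTc k j (by omega) hj2, hexp, pow_succ', Module.End.mul_apply]
      -- base of block k+1
      apply key
      have hQ1 := hP1 (k+1)
      have hPk1 := hP1 k
      have hFk := hF1 k
      have hgt : pos (a k, 0) ≤ pos (Δ (k+1), 0) - 1 := by omega
      have hlt' : pos (Δ (k+1), 0) - 1 < pos (Δ (k+1), 0) := by omega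
      have hfj := hB (pos (Δ (k+1), 0) - 1) hgt hlt'
      have hsh : pos (Δ (k+1), 0) - 1 - pos (a k, 0) = pos (Δ k, 0) - 1 := by omega
      have hsplit : (T ^ pos (Δ (k+1), 0)) (eVec b 0)
          = T ((T ^ (pos (Δ (k+1), 0) - 1)) (eVec b 0)) := by
        rw [← Module.End.mul_apply, ← pow_succ']
        have he : pos (Δ (k+1), 0) - 1 + 1 = pos (Δ (k+1), 0) := by omega
        rw [he]
      have hfP : T ((T ^ (pos (Δ k, 0) - 1)) (eVec b 0))
          = α (pos (Δ k, 0)) • eVec b (pos (Δ k, 0)) := by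
        rw [← Module.End.mul_apply, ← pow_succ']
        have : pos (Δ k, 0) - 1 + 1 = pos (Δ k, 0) := by omega
        rw [this]
        exact ihk _ le_rfl (hPlt k)
      have hAne : A (Nn k) (a k) ≠ 0 := ne_of_gt (hApos _ _)
      rw [hsplit, hfj, map_add, map_smul, hTd k, hsh, hfP]
      match_scalars <;> field_simp <;> ring
  -- norm of a single
  have hnorm_single : ∀ N (p : ℕ × ℕ) (cc : ℝ),
      norm3 A N ⇑(Finsupp.single p cc) = |cc| * A N p.1 := by
    intro N p cc
    have happ : ∀ q : ℕ × ℕ, (Finsupp.single p cc : ℕ × ℕ →₀ ℝ) q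
        = if p = q then cc else 0 := fun q => Finsupp.single_apply
    unfold norm3 colNorm
    have hcol : ∀ j : ℕ, (∑' i : ℕ, |(Finsupp.single p cc : ℕ × ℕ →₀ ℝ) (i, j)| * A N i)
        = if p.2 = j then |cc| * A N p.1 else 0 := by
      intro j
      by_cases hj : p.2 = j
      · rw [if_pos hj]
        rw [tsum_eq_single p.1 ?_]
        · rw [happ, if_pos (by rw [← hj])]
        · intro i hi
          rw [happ, if_neg, abs_zero, zero_mul]
          intro hpe
          exact hi (congrArg Prod.fst hpe).symm
      · rw [if_neg hj]
        have hz : ∀ i : ℕ, |(Finsupp.single p cc : ℕ × ℕ →₀ ℝ) (i, j)| * A N i = 0 := by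
          intro i
          rw [happ, if_neg, abs_zero, zero_mul]
          intro hpe
          exact hj (congrArg Prod.snd hpe)
        rw [tsum_congr hz, tsum_zero]
    rw [tsum_congr hcol, tsum_eq_single p.2 ?_]
    · rw [if_pos rfl]
    · intro j hj
      rw [if_neg (fun h => hj h.symm)]
  -- the first RHS term equals 2
  have hterm1 : norm3 A (Nn n) ⇑(eVec b (pos (a n, 0))) = A (Nn n) (a n) := by
    unfold eVec
    rw [henum_pos ((a n, 0) : ℕ × ℕ), hnorm_single]
    simp
  -- bound each norm in the sup range
  have hfinal : ∀ j, pos (Δ (n+1), 0) ≤ j → j ≤ 2 * (pos (Δ (n+1), 0) - 1) →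
      norm3 A (Nn n) ⇑((T ^ j) (eVec b 0)) ≤ 1 / D n := by
    intro j hj1 hj2
    have hbd := hbΔ (n+1) (by omega)
    have hoo := hord (n+1) (by omega)
    have hsge := hPge (s (n+1))
    have hage := hPge (a (n+1))
    have hQ1 := hP1 (n+1)
    have hj3 : j < pos (a (n+1), 0) := by omega
    have hjs : j < pos (s (n+1), 0) := by omega
    have hαv := hα1 (n+1) j (by omega) (by omega) hjs
    rw [Nat.add_sub_cancel] at hαv
    rw [hA_main (n+1) j hj1 hj3]
    have hsm : α j • eVec b j = Finsupp.single (enum b j) (α j) := by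
      unfold eVec
      rw [Finsupp.smul_single', mul_one]
    rw [hsm, hnorm_single]
    have hi : (enum b j).1 ≤ b (n+1) := le_trans (henum_fst j) (by omega)
    have hAb : A (Nn n) (enum b j).1 ≤ A (Nn n) (b (n+1)) := hA3m (Nn n) hi
    have hαle : |α j| ≤ (A (Nn (n+1)) (a (n+1)))⁻¹ := by
      rw [hαv, abs_of_nonneg (le_of_lt (mul_pos (div_pos one_pos (hApos _ _)) (inv_pos.mpr (pow_pos (mul_pos two_pos (hDpos n)) _))))]
      rw [one_div]
      have h1 : ((2 * D n) ^ (j - pos (Δ (n+1), 0)))⁻¹ ≤ 1 := by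
        apply inv_le_one_of_one_le₀
        apply one_le_pow₀
        have := hD n
        linarith
      calc (A (Nn (n+1)) (a (n+1)))⁻¹ * ((2 * D n) ^ (j - pos (Δ (n+1), 0)))⁻¹
          ≤ (A (Nn (n+1)) (a (n+1)))⁻¹ * 1 :=
            mul_le_mul_of_nonneg_left h1 (le_of_lt (inv_pos.mpr (hApos _ _)))
        _ = (A (Nn (n+1)) (a (n+1)))⁻¹ := mul_one _
    have h4 := hc4 (n+1) (by omega)
    rw [Nat.add_sub_cancel] at h4
    calc |α j| * A (Nn n) (enum b j).1
        ≤ (A (Nn (n+1)) (a (n+1)))⁻¹ * A (Nn n) (b (n+1)) := by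
          exact mul_le_mul hαle hAb (le_of_lt (hApos _ _)) (le_of_lt (inv_pos.mpr (hApos _ _)))
      _ ≤ 1 / D n := by
          rw [← div_eq_inv_mul, div_le_div_iff₀ (hApos _ _) (hDpos n)]
          nlinarith [h4]
  -- assemble
  have hsup : sSup ((fun j => norm3 A (Nn n) ⇑((T ^ j) (eVec b 0))) ''
      Set.Icc (pos (Δ (n+1), 0)) (2 * (pos (Δ (n+1), 0) - 1))) ≤ 1 / D n := by
    apply Real.sSup_le
    · rintro x ⟨j, hj, rfl⟩
      exact hfinal j hj.1 hj.2
    · exact le_of_lt (div_pos one_pos (hDpos n))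
  rw [hterm1, div_mul_cancel₀ _ (ne_of_gt (hApos (Nn n) (a n)))]
  have h2' : D n * sSup ((fun j => norm3 A (Nn n) ⇑((T ^ j) (eVec b 0))) ''
      Set.Icc (pos (Δ (n+1), 0)) (2 * (pos (Δ (n+1), 0) - 1)))
      ≤ D n * (1 / D n) := mul_le_mul_of_nonneg_left hsup (le_of_lt (hDpos n))
  have h3' : D n * (1 / D n) = 1 := by
    rw [mul_one_div, div_self (ne_of_gt (hDpos n))]
  linarith
end
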